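/- arXiv:2603.01738 — 12 statements merged into one kernel-verified Lean document; each statement's English description precedes it below -/
import Mathlib

section
/- Let q be an odd prime power. For all a0, a1, b0, b1, x1, x2, x3, x4, x5, x6 ∈ F, set a = ι(a0) + ε·ι(a1), b = ι(b0) + ε·ι(b1), x = ι(x1) + ε·ι(x2), y = ι(x3) + ε·ι(x4), z = ι(x5) + ε·ι(x6). Then z + a·(x² + y²) − b·(x^{q+1} + y^{q+1}) lies in the image ι(F) if and only if x6 + 2a0(x1x2 + x3x4) + a1(x1² + x3² + δ(x2² + x4²)) − b1(x1² − δx2² + x3² − δx4²) = 0 in F. -/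
/-- Barlotti–Cofman representation of the affine part of the BM variety `B_{a,b}`
in `PG(3,q²)`, `q` odd: membership of `z + a(x²+y²) − b(x^{q+1}+y^{q+1})` in `F_q`
is equivalent to the quadratic equation over `F_q`. -/
theorem stmt_0 (q : ℕ) (hq : Odd q)
    (F E : Type) [Field F] [Fintype F] [Field E] [Fintype E]
    (hF : Fintype.card F = q) (hE : Fintype.card E = q ^ 2)
    (ι : F →+* E) (ε : E) (hε : ε ∉ Set.range ι) (hεq : ε ^ q = -ε)
    (δ : F) (hδ : ι δ = ε ^ 2)
    (a0 a1 b0 b1 x1 x2 x3 x4 x5 x6 : F) :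
    ((ι x5 + ε * ι x6)
        + (ι a0 + ε * ι a1) * ((ι x1 + ε * ι x2) ^ 2 + (ι x3 + ε * ι x4) ^ 2)
        - (ι b0 + ε * ι b1) *
            ((ι x1 + ε * ι x2) ^ (q + 1) + (ι x3 + ε * ι x4) ^ (q + 1))
      ∈ Set.range ι)
    ↔ x6 + 2 * a0 * (x1 * x2 + x3 * x4)
        + a1 * (x1 ^ 2 + x3 ^ 2 + δ * (x2 ^ 2 + x4 ^ 2))
        - b1 * (x1 ^ 2 - δ * x2 ^ 2 + x3 ^ 2 - δ * x4 ^ 2) = 0 := by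
  have hinj := ι.injective
  -- membership lemma: `ι c + ε * ι d ∈ range ι ↔ d = 0`
  have hmem : ∀ c d : F, (ι c + ε * ι d ∈ Set.range ι ↔ d = 0) := by
    intro c d
    constructor
    · rintro ⟨e, he⟩
      by_contra hd
      have hιd : (ι d : E) ≠ 0 := fun h => hd (hinj (by simpa using h))
      apply hε
      refine ⟨(e - c) / d, ?_⟩
      rw [map_div₀, map_sub, he]
      field_simp
      ring
    · rintro rfl
      exact ⟨c, by simp⟩
  -- characteristic setup
  haveI hcharF : CharP F (ringChar F) := ringChar.charP F
  obtain ⟨n, hp, hcard⟩ := FiniteField.card F (ringChar F)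
  haveI : Fact (ringChar F).Prime := ⟨hp⟩
  haveI hcharE : CharP E (ringChar F) := charP_of_injective_ringHom hinj _
  have hqpn : q = ringChar F ^ (n : ℕ) := by rw [← hF, hcard]
  -- Frobenius facts
  have hpow : ∀ t : F, ι t ^ q = ι t := by
    intro t
    rw [← map_pow, ← hF, FiniteField.pow_card]
  have hfrob : ∀ u v : E, (u + v) ^ q = u ^ q + v ^ q := by
    intro u v
    rw [hqpn]
    exact add_pow_char_pow u v (ringChar F) (n : ℕ)
  -- norm computation
  have hxq : ∀ s t : F, (ι s + ε * ι t) ^ (q + 1) = ι (s ^ 2 - δ * t ^ 2) := by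
    intro s t
    have h1 : (ι s + ε * ι t) ^ (q + 1) = (ι s + ε * ι t) ^ q * (ι s + ε * ι t) := by
      rw [pow_succ]
    rw [h1, hfrob, mul_pow, hpow, hpow, hεq, map_sub, map_mul, map_pow, map_pow, hδ]
    ring
  rw [hxq, hxq]
  have key : (ι x5 + ε * ι x6)
        + (ι a0 + ε * ι a1) * ((ι x1 + ε * ι x2) ^ 2 + (ι x3 + ε * ι x4) ^ 2)
        - (ι b0 + ε * ι b1) *
            (ι (x1 ^ 2 - δ * x2 ^ 2) + ι (x3 ^ 2 - δ * x4 ^ 2))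
      = ι (x5 + a0 * (x1 ^ 2 + x3 ^ 2 + δ * (x2 ^ 2 + x4 ^ 2))
            + δ * a1 * (2 * (x1 * x2 + x3 * x4))
            - b0 * (x1 ^ 2 - δ * x2 ^ 2 + x3 ^ 2 - δ * x4 ^ 2))
        + ε * ι (x6 + 2 * a0 * (x1 * x2 + x3 * x4)
            + a1 * (x1 ^ 2 + x3 ^ 2 + δ * (x2 ^ 2 + x4 ^ 2))
            - b1 * (x1 ^ 2 - δ * x2 ^ 2 + x3 ^ 2 - δ * x4 ^ 2)) := by
    simp only [map_add, map_sub, map_mul, map_pow, map_ofNat, hδ]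
    ring
  rw [key, hmem]
end

section
/- Let F be a finite field of odd order q, let δ ∈ F be a nonsquare (i.e. t² ≠ δ for all t ∈ F), and let a0, a1, b1 ∈ F with δa1² − δb1² − a0² ≠ 0. Then the set {(x0, x1, x2, x3, x4, x6) ∈ F⁶ : x0x6 + 2a0(x1x2 + x3x4) + a1(x1² + x3² + δ(x2² + x4²)) − b1(x1² − δx2² + x3² − δx4²) = 0} has exactly q⁵ + q³ − q² elements. -/
open Finset

variable {F : Type} [Field F] [Fintype F] [DecidableEq F]

private lemma card_filter_pair {α β : Type} [Fintype α] [Fintype β] (P : α → β → Prop)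
    [∀ a b, Decidable (P a b)] :
    (univ.filter fun p : α × β => P p.1 p.2).card
      = ∑ a : α, (univ.filter fun b => P a b).card := by
  rw [Finset.card_filter, Fintype.sum_prod_type]
  exact Finset.sum_congr rfl fun a _ => (Finset.card_filter _ _).symm

/-- number of points on the hyperbola `xy = c`, `c ≠ 0`. -/
private lemma hyp_card {c : F} (hc : c ≠ 0) :
    (univ.filter fun p : F × F => p.1 * p.2 = c).card = Fintype.card F - 1 := by
  have himg : (univ.filter fun p : F × F => p.1 * p.2 = c)
      = (univ.filter fun x : F => x ≠ 0).image (fun x => (x, c * x⁻¹)) := by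
    ext p
    simp only [mem_filter, mem_image, mem_univ, true_and]
    constructor
    · intro hp
      have h1 : p.1 ≠ 0 := fun h0 => hc (by rw [← hp, h0, zero_mul])
      refine ⟨p.1, h1, ?_⟩
      have : p.2 = c * p.1⁻¹ := by field_simp; linear_combination hp
      rw [← this]
    · rintro ⟨x, hx, rfl⟩
      field_simp
  rw [himg, Finset.card_image_of_injective _ (fun x y hxy => (Prod.mk.injEq _ _ _ _ ▸ hxy).1),
    Finset.filter_ne' univ 0, Finset.card_erase_of_mem (mem_univ 0), Finset.card_univ]

/-- number of points on the degenerate hyperbola `xy = 0`. -/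
private lemma hyp_card0 :
    (univ.filter fun p : F × F => p.1 * p.2 = 0).card = 2 * Fintype.card F - 1 := by
  rw [card_filter_pair (fun a b : F => a * b = 0)]
  have h0 : (univ.filter fun b : F => (0 : F) * b = 0) = univ := by ext b; simp
  have h1 : ∀ a : F, a ≠ 0 → (univ.filter fun b : F => a * b = 0) = {0} := by
    intro a ha; ext b; simp [mul_eq_zero, ha]
  rw [Finset.sum_eq_sum_sdiff_singleton_add (Finset.mem_univ (0 : F)), h0, Finset.card_univ]
  rw [Finset.sum_congr rfl (fun a ha => by
    rw [h1 a (by simpa using (Finset.mem_sdiff.mp ha).2), Finset.card_singleton])]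
  rw [Finset.sum_const, Finset.card_sdiff_of_subset (by simp)]
  simp only [Finset.card_univ, Finset.card_singleton, smul_eq_mul, mul_one]
  have hq : 1 ≤ Fintype.card F := Fintype.card_pos
  omega

private lemma sq_card (hF : ringChar F ≠ 2) (a : F) :
    (((univ.filter fun x : F => x ^ 2 = a).card : ℤ)) = quadraticChar F a + 1 := by
  have h := quadraticChar_card_sqrts hF a
  have h2 : (univ.filter fun x : F => x ^ 2 = a).card = {x : F | x ^ 2 = a}.toFinset.card := by
    congr 1
    ext x
    rw [Set.mem_toFinset]
    simp
  rw [h2]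
  exact_mod_cast h

/-- reindexing a sum over squares by the quadratic character -/
private lemma sum_sq (hF : ringChar F ≠ 2) (g : F → ℤ) :
    ∑ y : F, g (y ^ 2) = ∑ u : F, (quadraticChar F u + 1) * g u := by
  have key : ∀ u : F, (quadraticChar F u + 1) * g u
      = ∑ y ∈ univ.filter (fun y : F => y ^ 2 = u), g (y ^ 2) := by
    intro u
    rw [Finset.sum_congr rfl (fun y hy => by rw [(Finset.mem_filter.mp hy).2]),
      Finset.sum_const, ← sq_card hF u, nsmul_eq_mul]
  rw [Finset.sum_congr rfl (fun u _ => key u)]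
  exact (Finset.sum_fiberwise_of_maps_to (g := fun y : F => y ^ 2)
    (fun y _ => Finset.mem_univ _) (fun y => g (y ^ 2))).symm

/-- the character sum `∑ χ(u² − d) = −1` for `d ≠ 0`. -/
private lemma Ksum (hF : ringChar F ≠ 2) {d : F} (hd : d ≠ 0) :
    ∑ u : F, (quadraticChar F (u ^ 2 - d) : ℤ) = -1 := by
  have h2 : (2 : F) ≠ 0 := Ring.two_ne_zero hF
  -- count points on u² − w² = d two ways
  have hcount : ((univ.filter fun p : F × F => p.1 ^ 2 - p.2 ^ 2 = d).card : ℤ)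
      = (Fintype.card F : ℤ) + ∑ u : F, (quadraticChar F (u ^ 2 - d) : ℤ) := by
    rw [card_filter_pair (fun a b : F => a ^ 2 - b ^ 2 = d)]
    push_cast
    rw [Finset.sum_congr rfl (fun u _ => by
      have : (univ.filter fun b : F => u ^ 2 - b ^ 2 = d)
          = (univ.filter fun b : F => b ^ 2 = u ^ 2 - d) := by
        ext b; constructor <;> intro hb <;> simp only [mem_filter, mem_univ, true_and] at * <;>
          linear_combination -hb
      rw [this, show ((univ.filter fun b : F => b ^ 2 = u ^ 2 - d).card : ℤ)
        = quadraticChar F (u ^ 2 - d) + 1 from sq_card hF _])]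
    rw [Finset.sum_add_distrib]
    simp [Finset.card_univ, add_comm]
  have hbij : (univ.filter fun p : F × F => p.1 ^ 2 - p.2 ^ 2 = d).card
      = (univ.filter fun p : F × F => p.1 * p.2 = d).card := by
    apply Finset.card_nbij' (fun p => (p.1 - p.2, p.1 + p.2))
      (fun p => ((p.1 + p.2) / 2, (p.2 - p.1) / 2))
    · intro p hp
      simp only [mem_coe, mem_filter, mem_univ, true_and] at *
      linear_combination hp
    · intro p hp
      simp only [mem_coe, mem_filter, mem_univ, true_and] at *
      field_simp
      linear_combination 4 * hp
    · intro p _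
      ext <;> field_simp <;> ring
    · intro p _
      ext <;> field_simp <;> ring
  rw [hbij, hyp_card hd] at hcount
  have hq : 1 ≤ Fintype.card F := Fintype.card_pos
  have : ((Fintype.card F - 1 : ℕ) : ℤ) = (Fintype.card F : ℤ) - 1 := by
    push_cast [hq]; ring
  rw [this] at hcount
  linarith

/-- `∑_y χ(c − γ y²) = −χ(−γ)` for `γ ≠ 0`, `c ≠ 0`. -/
private lemma Tsum (hF : ringChar F ≠ 2) {γ c : F} (hγ : γ ≠ 0) (hc : c ≠ 0) :
    ∑ y : F, (quadraticChar F (c - γ * y ^ 2) : ℤ) = -(quadraticChar F (-γ)) := by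
  have h2 : (2 : F) ≠ 0 := Ring.two_ne_zero hF
  rw [sum_sq hF (fun u => (quadraticChar F (c - γ * u) : ℤ))]
  have hsplit : ∑ u : F, ((quadraticChar F u : ℤ) + 1) * quadraticChar F (c - γ * u)
      = (∑ u : F, (quadraticChar F u : ℤ) * quadraticChar F (c - γ * u))
        + ∑ u : F, (quadraticChar F (c - γ * u) : ℤ) := by
    rw [← Finset.sum_add_distrib]
    exact Finset.sum_congr rfl fun u _ => by ring
  rw [hsplit]
  -- second sum is 0 by reindexing
  have hzero : ∑ u : F, (quadraticChar F (c - γ * u) : ℤ) = 0 := by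
    have hb : Function.Bijective (fun u : F => c - γ * u) := by
      constructor
      · intro x y hxy
        dsimp only at hxy
        exact mul_left_cancel₀ hγ (by linear_combination -hxy)
      · intro t
        exact ⟨(c - t) / γ, by field_simp; ring⟩
    rw [Fintype.sum_bijective _ hb (fun u => (quadraticChar F (c - γ * u) : ℤ))
      (fun t => (quadraticChar F t : ℤ)) (fun u => rfl)]
    exact quadraticChar_sum_zero hF
  rw [hzero, add_zero]
  -- first sum: complete the square
  set hh : F := c / (2 * γ) with hhdef
  have hhne : hh ≠ 0 := by
    simp only [hhdef, div_ne_zero_iff]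
    exact ⟨hc, by simp [h2, hγ]⟩
  have hd : hh ^ 2 ≠ 0 := pow_ne_zero _ hhne
  have hkey : ∀ u : F, u * (c - γ * u) = -γ * ((u - hh) ^ 2 - hh ^ 2) := by
    intro u
    simp only [hhdef]
    field_simp
    ring
  have : ∑ u : F, (quadraticChar F u : ℤ) * quadraticChar F (c - γ * u)
      = (quadraticChar F (-γ) : ℤ) * ∑ u : F, (quadraticChar F ((u - hh) ^ 2 - hh ^ 2) : ℤ) := by
    rw [Finset.mul_sum]
    exact Finset.sum_congr rfl fun u _ => by rw [← map_mul, hkey u, map_mul]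
  rw [this]
  have hshift : ∑ u : F, (quadraticChar F ((u - hh) ^ 2 - hh ^ 2) : ℤ)
      = ∑ v : F, (quadraticChar F (v ^ 2 - hh ^ 2) : ℤ) :=
    Equiv.sum_comp (Equiv.subRight hh) (fun v => (quadraticChar F (v ^ 2 - hh ^ 2) : ℤ))
  rw [hshift, Ksum hF hd]
  ring

/-- count of the diagonal conic `αx² + γy² = c` for `α γ c ≠ 0`. -/
private lemma diag_card (hF : ringChar F ≠ 2) {α γ c : F} (hα : α ≠ 0) (hγ : γ ≠ 0)
    (hc : c ≠ 0) :
    ((univ.filter fun p : F × F => α * p.1 ^ 2 + γ * p.2 ^ 2 = c).card : ℤ)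
      = Fintype.card F - quadraticChar F (-(α * γ)) := by
  rw [card_filter_pair (fun a b : F => α * a ^ 2 + γ * b ^ 2 = c)]
  push_cast
  have step : ∀ a : F, ((univ.filter fun b : F => α * a ^ 2 + γ * b ^ 2 = c).card : ℤ)
      = quadraticChar F ((c - α * a ^ 2) * γ⁻¹) + 1 := by
    intro a
    have : (univ.filter fun b : F => α * a ^ 2 + γ * b ^ 2 = c)
        = (univ.filter fun b : F => b ^ 2 = (c - α * a ^ 2) * γ⁻¹) := by
      ext b
      simp only [mem_filter, mem_univ, true_and]
      constructor <;> intro hb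
      · field_simp; linear_combination hb
      · field_simp at hb; linear_combination hb
    rw [this]; exact sq_card hF _
  rw [Finset.sum_congr rfl (fun a _ => step a), Finset.sum_add_distrib]
  simp only [Finset.sum_const, Finset.card_univ, nsmul_eq_mul, mul_one]
  have hmul : ∀ a : F, (quadraticChar F ((c - α * a ^ 2) * γ⁻¹) : ℤ)
      = quadraticChar F γ⁻¹ * quadraticChar F (c - α * a ^ 2) := by
    intro a; rw [← map_mul, mul_comm]
  rw [Finset.sum_congr rfl (fun a _ => hmul a), ← Finset.mul_sum, Tsum hF hα hc]
  have hγi : γ⁻¹ ≠ 0 := inv_ne_zero hγ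
  have hinv : (quadraticChar F γ⁻¹ : ℤ) = quadraticChar F γ := by
    have hmm : quadraticChar F γ * quadraticChar F γ⁻¹ = 1 := by
      rw [← map_mul, mul_inv_cancel₀ hγ, map_one]
    have hsq' : quadraticChar F γ ^ 2 = 1 := quadraticChar_sq_one hγ
    linear_combination (-(quadraticChar F γ⁻¹)) * hsq' + (quadraticChar F γ) * hmm
  rw [hinv]
  have : (quadraticChar F γ : ℤ) * -(quadraticChar F (-α)) = -(quadraticChar F (-(α * γ))) := by
    rw [show -(α * γ) = -α * γ by ring, map_mul]
    push_cast; ring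
  rw [this]; ring

/-- count of level sets of a nondegenerate binary quadratic form. -/
private lemma bin_count (hF : ringChar F ≠ 2) (α β B : F) (hd : α * B - β ^ 2 ≠ 0) :
    ∃ e : ℤ, e ^ 2 = 1 ∧ ∀ c : F, c ≠ 0 →
      ((univ.filter fun p : F × F =>
          α * p.1 ^ 2 + 2 * β * p.1 * p.2 + B * p.2 ^ 2 = c).card : ℤ)
        = Fintype.card F - e := by
  have h2 : (2 : F) ≠ 0 := Ring.two_ne_zero hF
  by_cases hα : α = 0
  · -- degenerate leading coefficient: the form is equivalent to xy
    subst hα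
    have hβ : β ≠ 0 := by
      intro hβ0; apply hd; rw [hβ0]; ring
    refine ⟨1, by norm_num, fun c hc => ?_⟩
    have hbij : (univ.filter fun p : F × F =>
          (0 : F) * p.1 ^ 2 + 2 * β * p.1 * p.2 + B * p.2 ^ 2 = c).card
        = (univ.filter fun p : F × F => p.1 * p.2 = c).card := by
      apply Finset.card_nbij' (fun p => (p.2, 2 * β * p.1 + B * p.2))
        (fun p => ((p.2 - B * p.1) / (2 * β), p.1))
      · intro p hp
        simp only [mem_coe, mem_filter, mem_univ, true_and] at *
        linear_combination hp
      · intro p hp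
        simp only [mem_coe, mem_filter, mem_univ, true_and] at *
        field_simp
        linear_combination 4 * β ^ 2 * hp
      · intro p _; ext <;> field_simp <;> ring
      · intro p _; ext <;> field_simp <;> ring
    rw [hbij, hyp_card hc]
    have hq : 1 ≤ Fintype.card F := Fintype.card_pos
    push_cast [hq]
    ring
  · -- complete the square
    set γ : F := B - β ^ 2 * α⁻¹ with hγdef
    have hαγ : α * γ = α * B - β ^ 2 := by
      simp only [hγdef]; field_simp
    have hγ : γ ≠ 0 := by
      intro h0
      apply hd; rw [← hαγ, h0, mul_zero]
    refine ⟨quadraticChar F (-(α * γ)),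
      quadraticChar_sq_one (neg_ne_zero.mpr (mul_ne_zero hα hγ)), fun c hc => ?_⟩
    · have hbij : (univ.filter fun p : F × F =>
            α * p.1 ^ 2 + 2 * β * p.1 * p.2 + B * p.2 ^ 2 = c).card
          = (univ.filter fun p : F × F => α * p.1 ^ 2 + γ * p.2 ^ 2 = c).card := by
        apply Finset.card_nbij' (fun p => (p.1 + β * α⁻¹ * p.2, p.2))
          (fun p => (p.1 - β * α⁻¹ * p.2, p.2))
        · intro p hp
          simp only [mem_coe, mem_filter, mem_univ, true_and, hγdef] at *
          field_simp
          linear_combination α * hp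
        · intro p hp
          simp only [mem_coe, mem_filter, mem_univ, true_and, hγdef] at *
          field_simp at hp ⊢
          linear_combination hp
        · intro p _; ext <;> simp <;> ring
        · intro p _; ext <;> simp <;> ring
      rw [hbij]
      exact diag_card hF hα hγ hc

set_option maxHeartbeats 1000000 in
/-- The base quadric of the BC cone `B'` of a BM variety (`q` odd) has
`q⁵ + q³ − q²` vector solutions, i.e. it is a hyperbolic quadric `Q⁺(5,q)`.
The coordinates are `(x0, x1, x2, x3, x4, x6) = (v 0, v 1, v 2, v 3, v 4, v 5)`. -/
theorem stmt_3 (F : Type) [Field F] [Fintype F] (hq : Odd (Fintype.card F))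
    (δ : F) (hδ : ∀ t : F, t ^ 2 ≠ δ)
    (a0 a1 b1 : F) (h : δ * a1 ^ 2 - δ * b1 ^ 2 - a0 ^ 2 ≠ 0) :
    Nat.card {v : Fin 6 → F |
        v 0 * v 5 + 2 * a0 * (v 1 * v 2 + v 3 * v 4)
          + a1 * ((v 1) ^ 2 + (v 3) ^ 2 + δ * ((v 2) ^ 2 + (v 4) ^ 2))
          - b1 * ((v 1) ^ 2 - δ * (v 2) ^ 2 + (v 3) ^ 2 - δ * (v 4) ^ 2) = 0}
      = Fintype.card F ^ 5 + Fintype.card F ^ 3 - Fintype.card F ^ 2 := by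
  classical
  letI : DecidableEq F := Classical.decEq F
  have hF : ringChar F ≠ 2 := by
    intro h2
    have heven := FiniteField.even_card_of_char_two h2
    rcases hq with ⟨k, hk⟩
    omega
  set q := Fintype.card F with hqdef
  have hq1 : 1 ≤ q := Fintype.card_pos
  -- the binary quadratic form
  set Q : F × F → F :=
    fun p => (a1 - b1) * p.1 ^ 2 + 2 * a0 * p.1 * p.2 + δ * (a1 + b1) * p.2 ^ 2 with hQ
  obtain ⟨e, he2, hcnt⟩ := bin_count hF (a1 - b1) a0 (δ * (a1 + b1))
    (fun h0 => h (by linear_combination h0))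
  -- the count of zeros of Q
  set n0 := (univ.filter fun p : F × F => Q p = 0).card with hn0def
  have hq2 : ((q : ℤ) ^ 2) = (n0 : ℤ) + ((q : ℤ) - 1) * ((q : ℤ) - e) := by
    have hfib : (univ : Finset (F × F)).card
        = ∑ c : F, (univ.filter fun p : F × F => Q p = c).card :=
      Finset.card_eq_sum_card_fiberwise (fun x _ => Finset.mem_univ _)
    have hcardFF : (univ : Finset (F × F)).card = q ^ 2 := by
      simp [Finset.card_univ, sq, hqdef]
    rw [hcardFF, Finset.sum_eq_sum_sdiff_singleton_add (Finset.mem_univ (0 : F))] at hfib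
    have hZ := congrArg (Nat.cast (R := ℤ)) hfib
    push_cast at hZ
    rw [Finset.sum_congr rfl (fun c hc =>
      hcnt c (by simpa using (Finset.mem_sdiff.mp hc).2)), Finset.sum_const,
      Finset.card_sdiff_of_subset (by simp), Finset.card_univ, Finset.card_singleton] at hZ
    have hc1 : ((q - 1 : ℕ) : ℤ) = (q : ℤ) - 1 := by push_cast [hq1]; ring
    rw [nsmul_eq_mul, hc1] at hZ
    linarith
  -- count of zeros of Q ⊥ Q
  set N0 := (univ.filter fun w : (F × F) × (F × F) => Q w.1 + Q w.2 = 0).card with hN0def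
  have hN0 : (N0 : ℤ) = (n0 : ℤ) * n0 + ((q : ℤ) ^ 2 - n0) * ((q : ℤ) - e) := by
    rw [hN0def, card_filter_pair (fun w1 w2 : F × F => Q w1 + Q w2 = 0)]
    push_cast
    have hterm : ∀ w1 : F × F, ((univ.filter fun w2 : F × F => Q w1 + Q w2 = 0).card : ℤ)
        = if Q w1 = 0 then (n0 : ℤ) else (q : ℤ) - e := by
      intro w1
      by_cases h1 : Q w1 = 0
      · rw [if_pos h1]
        have hset : (univ.filter fun w2 : F × F => Q w1 + Q w2 = 0)
            = univ.filter fun w2 : F × F => Q w2 = 0 := by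
          ext w2; simp [h1]
        rw [hset, hn0def]
      · rw [if_neg h1]
        have hset : (univ.filter fun w2 : F × F => Q w1 + Q w2 = 0)
            = univ.filter fun w2 : F × F =>
                (a1 - b1) * w2.1 ^ 2 + 2 * a0 * w2.1 * w2.2 + δ * (a1 + b1) * w2.2 ^ 2
                  = -Q w1 := by
          ext w2
          simp only [mem_filter, mem_univ, true_and, hQ]
          constructor <;> intro hh <;> linear_combination hh
        rw [hset]
        exact hcnt _ (neg_ne_zero.mpr h1)
    rw [Finset.sum_congr rfl (fun w1 _ => hterm w1), Finset.sum_ite,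
      Finset.sum_const, Finset.sum_const]
    have hposcard : (univ.filter fun w1 : F × F => Q w1 = 0).card = n0 := hn0def.symm
    have hnegcard : ((univ.filter fun w1 : F × F => ¬Q w1 = 0).card : ℤ)
        = (q : ℤ) ^ 2 - n0 := by
      have hsum := Finset.card_filter_add_card_filter_not
        (s := (univ : Finset (F × F))) (fun w1 => Q w1 = 0)
      have hcardFF : (univ : Finset (F × F)).card = q ^ 2 := by
        simp [Finset.card_univ, sq, hqdef]
      rw [hcardFF, ← hn0def] at hsum
      have hXle : n0 ≤ q ^ 2 := Nat.le.intro hsum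
      have hX : (univ.filter fun w1 : F × F => ¬Q w1 = 0).card = q ^ 2 - n0 :=
        Nat.eq_sub_of_add_eq' hsum
      rw [hX]
      push_cast [hXle]
      ring
    simp only [nsmul_eq_mul]
    rw [hnegcard]
  have key : (N0 : ℤ) = (q : ℤ) ^ 3 + (q : ℤ) ^ 2 - q := by
    have hn0v : (n0 : ℤ) = (q : ℤ) + ((q : ℤ) - 1) * e := by linear_combination -hq2
    rw [hN0, hn0v]
    linear_combination ((q : ℤ) - 1) ^ 2 * he2 + ((q : ℤ) - 1) * he2
  -- total count over the sextuples
  have htotal : ((univ.filter fun t : ((F × F) × (F × F)) × (F × F) =>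
      Q t.1.1 + Q t.1.2 + t.2.1 * t.2.2 = 0).card : ℤ)
        = (q : ℤ) ^ 5 + (q : ℤ) ^ 3 - (q : ℤ) ^ 2 := by
    rw [card_filter_pair (fun w : (F × F) × (F × F) => fun p : F × F =>
      Q w.1 + Q w.2 + p.1 * p.2 = 0)]
    push_cast
    have hterm : ∀ w : (F × F) × (F × F),
        ((univ.filter fun p : F × F => Q w.1 + Q w.2 + p.1 * p.2 = 0).card : ℤ)
          = if Q w.1 + Q w.2 = 0 then 2 * (q : ℤ) - 1 else (q : ℤ) - 1 := by
      intro w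
      have hiff : (univ.filter fun p : F × F => Q w.1 + Q w.2 + p.1 * p.2 = 0)
          = univ.filter fun p : F × F => p.1 * p.2 = -(Q w.1 + Q w.2) := by
        ext p
        simp only [mem_filter, mem_univ, true_and]
        constructor <;> intro hh <;> linear_combination hh
      rw [hiff]
      by_cases hw : Q w.1 + Q w.2 = 0
      · rw [if_pos hw, hw, neg_zero, hyp_card0]
        rw [Nat.cast_sub (show 1 ≤ 2 * Fintype.card F by omega), ← hqdef]; push_cast
        ring
      · rw [if_neg hw, hyp_card (neg_ne_zero.mpr hw)]
        rw [Nat.cast_sub (show 1 ≤ Fintype.card F by omega), ← hqdef]; push_cast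
        ring
    rw [Finset.sum_congr rfl (fun w _ => hterm w), Finset.sum_ite,
      Finset.sum_const, Finset.sum_const]
    have hposcard : (univ.filter fun w : (F × F) × (F × F) => Q w.1 + Q w.2 = 0).card = N0 :=
      hN0def.symm
    have hnegcard : ((univ.filter fun w : (F × F) × (F × F) => ¬(Q w.1 + Q w.2 = 0)).card : ℤ)
        = (q : ℤ) ^ 4 - N0 := by
      have hsum := Finset.card_filter_add_card_filter_not
        (s := (univ : Finset ((F × F) × (F × F)))) (fun w => Q w.1 + Q w.2 = 0)
      have hcard4 : (univ : Finset ((F × F) × (F × F))).card = q ^ 4 := by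
        simp [Finset.card_univ]
        ring
      rw [hcard4, ← hN0def] at hsum
      have hXle : N0 ≤ q ^ 4 := Nat.le.intro hsum
      have hX : (univ.filter fun w : (F × F) × (F × F) => ¬(Q w.1 + Q w.2 = 0)).card
          = q ^ 4 - N0 := Nat.eq_sub_of_add_eq' hsum
      rw [hX]
      push_cast [hXle]
      ring
    simp only [nsmul_eq_mul]
    rw [hposcard, hnegcard]
    linear_combination (q : ℤ) * key
  -- identify the original set with the product count
  let e6 : (Fin 6 → F) ≃ (((F × F) × (F × F)) × (F × F)) :=
    { toFun := fun v => (((v 1, v 2), (v 3, v 4)), (v 0, v 5))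
      invFun := fun t => ![t.2.1, t.1.1.1, t.1.1.2, t.1.2.1, t.1.2.2, t.2.2]
      left_inv := fun v => by funext i; fin_cases i <;> rfl
      right_inv := fun t => rfl }
  have hiff : ∀ v : Fin 6 → F,
      v ∈ {v : Fin 6 → F |
        v 0 * v 5 + 2 * a0 * (v 1 * v 2 + v 3 * v 4)
          + a1 * ((v 1) ^ 2 + (v 3) ^ 2 + δ * ((v 2) ^ 2 + (v 4) ^ 2))
          - b1 * ((v 1) ^ 2 - δ * (v 2) ^ 2 + (v 3) ^ 2 - δ * (v 4) ^ 2) = 0}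
      ↔ Q (e6 v).1.1 + Q (e6 v).1.2 + (e6 v).2.1 * (e6 v).2.2 = 0 := by
    intro v
    have hev : e6 v = (((v 1, v 2), (v 3, v 4)), (v 0, v 5)) := rfl
    rw [hev]
    simp only [Set.mem_setOf_eq, hQ]
    constructor <;> intro hh <;> linear_combination hh
  have hcardeq : Nat.card {v : Fin 6 → F |
        v 0 * v 5 + 2 * a0 * (v 1 * v 2 + v 3 * v 4)
          + a1 * ((v 1) ^ 2 + (v 3) ^ 2 + δ * ((v 2) ^ 2 + (v 4) ^ 2))
          - b1 * ((v 1) ^ 2 - δ * (v 2) ^ 2 + (v 3) ^ 2 - δ * (v 4) ^ 2) = 0}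
      = (univ.filter fun t : ((F × F) × (F × F)) × (F × F) =>
          Q t.1.1 + Q t.1.2 + t.2.1 * t.2.2 = 0).card := by
    rw [Nat.card_congr (Equiv.subtypeEquiv
        (q := fun t : ((F × F) × (F × F)) × (F × F) =>
          Q t.1.1 + Q t.1.2 + t.2.1 * t.2.2 = 0) e6 hiff),
      Nat.card_eq_fintype_card, Fintype.card_subtype]
  rw [hcardeq]
  have hle' : q ^ 2 ≤ q ^ 3 := Nat.pow_le_pow_right hq1 (by norm_num)
  zify [show q ^ 2 ≤ q ^ 5 + q ^ 3 from le_trans hle' (Nat.le_add_left _ _)]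
  linarith [htotal]
end

section
/- Let F be a finite field of odd order q, let δ ∈ F be a nonsquare (i.e. t² ≠ δ for all t ∈ F), and let a0, a1, b1 ∈ F with (a0,a1) ≠ (0,0), b1 ≠ 0 and δa1² − δb1² − a0² ≠ 0. Then the set of pairs (μ0, μ1) ∈ F² satisfying the system: (a1−b1)(1+μ0²) + δ(a1+b1)μ1² + 2a0μ0μ1 = 0, δ²(a1−b1)μ1² + δ(a1+b1)(1+μ0²) + 2δa0μ0μ1 = 0, and 2δa1μ0μ1 + a0(δμ1² + μ0² + 1) = 0, is exactly {(μ0, 0) : μ0² = −1}. In particular this set has 2 elements if q ≡ 1 (mod 4) and is empty if q ≡ 3 (mod 4). -/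
/-- The system expressing that the spread line `r(0,1,μ0+εμ1,t)` is contained in
the BC cone `B'` of a BM variety, `q` odd: its solution set is
`{(μ0, 0) : μ0² = −1}`, which has 2 elements if `q ≡ 1 (mod 4)` and is empty if
`q ≡ 3 (mod 4)`. -/
theorem stmt_4 (F : Type) [Field F] [Fintype F] (hq : Odd (Fintype.card F))
    (δ : F) (hδ : ∀ t : F, t ^ 2 ≠ δ)
    (a0 a1 b1 : F) (ha : (a0, a1) ≠ (0, 0)) (hb : b1 ≠ 0)
    (h : δ * a1 ^ 2 - δ * b1 ^ 2 - a0 ^ 2 ≠ 0) :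
    ({p : F × F |
        (a1 - b1) * (1 + p.1 ^ 2) + δ * (a1 + b1) * p.2 ^ 2 + 2 * a0 * p.1 * p.2 = 0
        ∧ δ ^ 2 * (a1 - b1) * p.2 ^ 2 + δ * (a1 + b1) * (1 + p.1 ^ 2)
            + 2 * δ * a0 * p.1 * p.2 = 0
        ∧ 2 * δ * a1 * p.1 * p.2 + a0 * (δ * p.2 ^ 2 + p.1 ^ 2 + 1) = 0}
      = {p : F × F | p.2 = 0 ∧ p.1 ^ 2 = -1})
    ∧ (Fintype.card F % 4 = 1 →
        Nat.card {p : F × F |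
          (a1 - b1) * (1 + p.1 ^ 2) + δ * (a1 + b1) * p.2 ^ 2 + 2 * a0 * p.1 * p.2 = 0
          ∧ δ ^ 2 * (a1 - b1) * p.2 ^ 2 + δ * (a1 + b1) * (1 + p.1 ^ 2)
              + 2 * δ * a0 * p.1 * p.2 = 0
          ∧ 2 * δ * a1 * p.1 * p.2 + a0 * (δ * p.2 ^ 2 + p.1 ^ 2 + 1) = 0} = 2)
    ∧ (Fintype.card F % 4 = 3 →
        {p : F × F |
          (a1 - b1) * (1 + p.1 ^ 2) + δ * (a1 + b1) * p.2 ^ 2 + 2 * a0 * p.1 * p.2 = 0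
          ∧ δ ^ 2 * (a1 - b1) * p.2 ^ 2 + δ * (a1 + b1) * (1 + p.1 ^ 2)
              + 2 * δ * a0 * p.1 * p.2 = 0
          ∧ 2 * δ * a1 * p.1 * p.2 + a0 * (δ * p.2 ^ 2 + p.1 ^ 2 + 1) = 0} = ∅) := by
  have h2 : (2:F) ≠ 0 := by
    intro h2
    have hc : ringChar F = 2 :=
      CharP.ringChar_of_prime_eq_zero Nat.prime_two (by exact_mod_cast h2)
    have := FiniteField.even_card_of_char_two hc
    rw [Nat.odd_iff] at hq; omega
  have hδ0 : δ ≠ 0 := fun h0 => hδ 0 (by simp [h0])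
  -- main set equality
  have hset : {p : F × F |
        (a1 - b1) * (1 + p.1 ^ 2) + δ * (a1 + b1) * p.2 ^ 2 + 2 * a0 * p.1 * p.2 = 0
        ∧ δ ^ 2 * (a1 - b1) * p.2 ^ 2 + δ * (a1 + b1) * (1 + p.1 ^ 2)
            + 2 * δ * a0 * p.1 * p.2 = 0
        ∧ 2 * δ * a1 * p.1 * p.2 + a0 * (δ * p.2 ^ 2 + p.1 ^ 2 + 1) = 0}
      = {p : F × F | p.2 = 0 ∧ p.1 ^ 2 = -1} := by
    ext ⟨x, y⟩
    simp only [Set.mem_setOf_eq]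
    constructor
    · rintro ⟨e1, e2, e3⟩
      -- e2 - δ e1 : 2 δ b1 (1 + x² - δ y²) = 0
      have key : 2 * δ * b1 * (1 + x ^ 2 - δ * y ^ 2) = 0 := by
        linear_combination e2 - δ * e1
      have hA : 1 + x ^ 2 - δ * y ^ 2 = 0 := by
        rcases mul_eq_zero.mp key with h' | h'
        · rcases mul_eq_zero.mp h' with h'' | h''
          · rcases mul_eq_zero.mp h'' with h3 | h3
            · exact absurd h3 h2
            · exact absurd h3 hδ0
          · exact absurd h'' hb
        · exact h'
      -- sum: 2 δ a1 (1+x²) + ... gives y (δ a1 y + a0 x) = 0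
      have s1 : 2 * δ * 2 * (y * (δ * a1 * y + a0 * x)) = 0 := by
        linear_combination e2 + δ * e1 - 2 * δ * a1 * hA
      have s2 : 2 * δ * (y * (a1 * x + a0 * y)) = 0 := by
        linear_combination e3 - a0 * hA
      have hy1 : y * (δ * a1 * y + a0 * x) = 0 := by
        rcases mul_eq_zero.mp s1 with h' | h'
        · rcases mul_eq_zero.mp h' with h'' | h''
          · rcases mul_eq_zero.mp h'' with h3 | h3
            · exact absurd h3 h2
            · exact absurd h3 hδ0
          · exact absurd h'' h2
        · exact h'
      have hy2 : y * (a1 * x + a0 * y) = 0 := by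
        rcases mul_eq_zero.mp s2 with h' | h'
        · rcases mul_eq_zero.mp h' with h'' | h''
          · exact absurd h'' h2
          · exact absurd h'' hδ0
        · exact h'
      have hy0 : y = 0 := by
        by_contra hy
        have t1 : δ * a1 * y + a0 * x = 0 := by
          rcases mul_eq_zero.mp hy1 with h' | h'
          · exact absurd h' hy
          · exact h'
        have t2 : a1 * x + a0 * y = 0 := by
          rcases mul_eq_zero.mp hy2 with h' | h'
          · exact absurd h' hy
          · exact h'
        have t3 : (δ * a1 ^ 2 - a0 ^ 2) * y = 0 := by
          linear_combination a1 * t1 - a0 * t2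
        have t4 : δ * a1 ^ 2 - a0 ^ 2 = 0 := by
          rcases mul_eq_zero.mp t3 with h' | h'
          · exact h'
          · exact absurd h' hy
        by_cases ha1 : a1 = 0
        · have ha0 : a0 = 0 := by
            have h0 : a0 ^ 2 = 0 := by rw [ha1] at t4; linear_combination -t4
            exact pow_eq_zero_iff (n := 2) (by norm_num) |>.mp h0
          exact ha (by simp [ha0, ha1])
        · exact hδ (a0 / a1) (by field_simp; linear_combination -t4)
      refine ⟨hy0, ?_⟩
      have := hA
      rw [hy0] at this
      linear_combination this
    · rintro ⟨hy, hx⟩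
      subst hy
      exact ⟨by linear_combination (a1 - b1) * hx,
        by linear_combination δ * (a1 + b1) * hx,
        by linear_combination a0 * hx⟩
  refine ⟨hset, ?_, ?_⟩
  · intro hq1
    rw [hset]
    obtain ⟨i, hi⟩ := FiniteField.isSquare_neg_one_iff.mpr (by omega : Fintype.card F % 4 ≠ 3)
    have hi0 : i ≠ 0 := by rintro rfl; simp at hi
    have hpair : {p : F × F | p.2 = 0 ∧ p.1 ^ 2 = -1} = {((i:F), (0:F)), (-i, 0)} := by
      ext ⟨x, y⟩
      simp only [Set.mem_setOf_eq, Set.mem_insert_iff, Set.mem_singleton_iff, Prod.mk.injEq]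
      constructor
      · rintro ⟨rfl, hx⟩
        have : x * x = i * i := by rw [← hi]; linear_combination hx
        rcases mul_self_eq_mul_self_iff.mp this with h' | h'
        · exact Or.inl ⟨h', rfl⟩
        · exact Or.inr ⟨h', rfl⟩
      · rintro (⟨rfl, rfl⟩ | ⟨rfl, rfl⟩)
        · exact ⟨rfl, by rw [sq, ← hi]⟩
        · exact ⟨rfl, by rw [neg_sq, sq, ← hi]⟩
    rw [hpair, Nat.card_coe_set_eq, Set.ncard_pair]
    intro hc
    have : i = -i := congrArg Prod.fst hc
    have : 2 * i = 0 := by linear_combination this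
    rcases mul_eq_zero.mp this with h' | h'
    · exact h2 h'
    · exact hi0 h'
  · intro hq3
    rw [hset]
    ext ⟨x, y⟩
    simp only [Set.mem_setOf_eq, Set.mem_empty_iff_false, iff_false, not_and]
    intro _ hx
    have : IsSquare (-1 : F) := ⟨x, by rw [← hx, sq]⟩
    exact (FiniteField.isSquare_neg_one_iff.mp this) (by omega)
end

section
/- Let q be an odd prime power. For all x1, x2, x3, x4 ∈ F with (x1, x2) ≠ (0, 0) and x1² − δx2² + x3² − δx4² = 0, there exists a unique α ∈ E such that α^{q+1} = −1 and ι(x3) + ε·ι(x4) = α·(ι(x1) + ε·ι(x2)). -/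
/-- Uniqueness part of the partition proposition: every point of
`{x1² − δx2² + x3² − δx4² = 0}` with `(x1,x2) ≠ (0,0)` lies on exactly one
spread line `r(0,1,α,t)` with `α^{q+1} = −1`. -/
theorem stmt_6 (q : ℕ) (hq : Odd q)
    (F E : Type) [Field F] [Fintype F] [Field E] [Fintype E]
    (hF : Fintype.card F = q) (hE : Fintype.card E = q ^ 2)
    (ι : F →+* E) (ε : E) (hε : ε ∉ Set.range ι) (hεq : ε ^ q = -ε)
    (δ : F) (hδ : ι δ = ε ^ 2)
    (x1 x2 x3 x4 : F) (hx : (x1, x2) ≠ (0, 0))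
    (h : x1 ^ 2 - δ * x2 ^ 2 + x3 ^ 2 - δ * x4 ^ 2 = 0) :
    ∃! α : E, α ^ (q + 1) = -1 ∧ ι x3 + ε * ι x4 = α * (ι x1 + ε * ι x2) := by
  -- characteristic facts
  set p := ringChar F with hp
  haveI : CharP F p := ringChar.charP F
  obtain ⟨n, hpprime, hcard⟩ := FiniteField.card F p
  haveI : Fact p.Prime := ⟨hpprime⟩
  haveI : CharP E p := charP_of_injective_ringHom ι.injective p
  have hqpn : q = p ^ (n : ℕ) := by rw [← hF, hcard]
  -- Frobenius facts
  have hfix : ∀ x : F, (ι x) ^ q = ι x := by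
    intro x
    rw [← map_pow, ← hF, FiniteField.pow_card]
  have hadd : ∀ a b : E, (a + b) ^ q = a ^ q + b ^ q := by
    intro a b
    rw [hqpn]
    exact add_pow_char_pow a b p n
  set u : E := ι x1 + ε * ι x2 with hu
  set v : E := ι x3 + ε * ι x4 with hv
  have hmulq : ∀ a b : E, (a * b) ^ q = a ^ q * b ^ q := fun a b => mul_pow a b q
  have huq : u ^ q = ι x1 - ε * ι x2 := by
    rw [hu, hadd, hfix, hmulq, hfix, hεq]; ring
  have hvq : v ^ q = ι x3 - ε * ι x4 := by
    rw [hv, hadd, hfix, hmulq, hfix, hεq]; ring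
  have hune : u ≠ 0 := by
    intro h0
    rcases eq_or_ne x2 0 with h2 | h2
    · have : ι x1 = 0 := by rw [hu] at h0; simpa [h2] using h0
      have h1 : x1 = 0 := ι.injective (by simpa using this)
      exact hx (by simp [h1, h2])
    · apply hε
      refine ⟨-x1 / x2, ?_⟩
      have hι2 : ι x2 ≠ 0 := fun hh => h2 (ι.injective (by simpa using hh))
      rw [hu] at h0
      rw [map_div₀, map_neg, div_eq_iff hι2]
      linear_combination -h0
  have hupow : u ^ (q + 1) = ι (x1 ^ 2 - δ * x2 ^ 2) := by
    rw [pow_succ, huq, hu]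
    push_cast [map_sub, map_mul, map_pow, hδ]
    ring
  have hvpow : v ^ (q + 1) = ι (x3 ^ 2 - δ * x4 ^ 2) := by
    rw [pow_succ, hvq, hv]
    push_cast [map_sub, map_mul, map_pow, hδ]
    ring
  have hA : ι (x3 ^ 2 - δ * x4 ^ 2) = - ι (x1 ^ 2 - δ * x2 ^ 2) := by
    rw [← map_neg]
    exact congrArg ι (by linear_combination h)
  have hupow_ne : u ^ (q + 1) ≠ 0 := pow_ne_zero _ hune
  refine ⟨v / u, ⟨?_, ?_⟩, ?_⟩
  · rw [div_pow, hvpow, hA, ← hupow, neg_div, div_self hupow_ne]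
  · rw [div_mul_cancel₀ _ hune]
  · rintro β ⟨-, hβ⟩
    rw [eq_div_iff hune, ← hβ]
end

section
/- Let q = 2^e with e ≥ 2. For all a0, a1, b0, b1, x1, x2, x3, x4, x5, x6 ∈ F, set a = ι(a0) + ε·ι(a1), b = ι(b0) + ε·ι(b1), x = ι(x1) + ε·ι(x2), y = ι(x3) + ε·ι(x4), z = ι(x5) + ε·ι(x6). Then z + a·(x² + y²) + b·(x^{q+1} + y^{q+1}) lies in the image ι(F) if and only if x6 + a0(x2² + x4²) + a1(x1² + x2² + δx2² + x3² + x4² + δx4²) + b1(x1² + δx2² + x1x2 + x3² + δx4² + x3x4) = 0 in F. -/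
/-- Barlotti–Cofman representation of the affine part of the BM variety
`B_{a,b}` in `PG(3,q²)`, `q = 2^e` even. -/
theorem stmt_7 (e : ℕ) (he : 2 ≤ e)
    (F E : Type) [Field F] [Fintype F] [Field E] [Fintype E]
    (hF : Fintype.card F = 2 ^ e) (hE : Fintype.card E = (2 ^ e) ^ 2)
    (ι : F →+* E) (δ : F) (ε : E) (hε : ε ∉ Set.range ι)
    (hεδ : ε ^ 2 + ε = ι δ)
    (a0 a1 b0 b1 x1 x2 x3 x4 x5 x6 : F) :
    ((ι x5 + ε * ι x6)
        + (ι a0 + ε * ι a1) * ((ι x1 + ε * ι x2) ^ 2 + (ι x3 + ε * ι x4) ^ 2)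
        + (ι b0 + ε * ι b1) *
            ((ι x1 + ε * ι x2) ^ (2 ^ e + 1) + (ι x3 + ε * ι x4) ^ (2 ^ e + 1))
      ∈ Set.range ι)
    ↔ x6 + a0 * (x2 ^ 2 + x4 ^ 2)
        + a1 * (x1 ^ 2 + x2 ^ 2 + δ * x2 ^ 2 + x3 ^ 2 + x4 ^ 2 + δ * x4 ^ 2)
        + b1 * (x1 ^ 2 + δ * x2 ^ 2 + x1 * x2 + x3 ^ 2 + δ * x4 ^ 2 + x3 * x4)
      = 0 := by
  classical
  -- characteristic 2
  obtain ⟨p, hp⟩ := CharP.exists E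
  haveI := hp
  obtain ⟨n, hpprime, hcard⟩ := FiniteField.card E p
  have hp2 : p = 2 := by
    have hdvd : p ∣ 2 ^ (e * 2) := by
      rw [← pow_mul] at hE
      exact hE ▸ hcard ▸ dvd_pow_self p n.pos.ne'
    exact (Nat.prime_dvd_prime_iff_eq hpprime Nat.prime_two).mp
      (hpprime.dvd_of_dvd_pow hdvd)
  subst hp2
  haveI : ExpChar E 2 := ExpChar.prime Nat.prime_two
  have htwoE : (2 : E) = 0 := by
    have := CharP.cast_eq_zero E 2
    simpa using this
  have hqmap : ∀ c : F, ι c ^ 2 ^ e = ι c := fun c => by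
    rw [← map_pow, ← hF, FiniteField.pow_card]
  have hfrob : ∀ x y : E, (x + y) ^ 2 ^ e = x ^ 2 ^ e + y ^ 2 ^ e :=
    fun x y => add_pow_expChar_pow x y 2 e
  have hq4 : 4 ≤ 2 ^ e := by
    calc (4 : ℕ) = 2 ^ 2 := rfl
    _ ≤ 2 ^ e := Nat.pow_le_pow_right (by norm_num) he
  -- fixed points of the q-power Frobenius lie in the image of ι
  have key : ∀ x : E, x ^ 2 ^ e = x → x ∈ Set.range ι := by
    intro x hx
    set P : Polynomial E := Polynomial.X ^ 2 ^ e - Polynomial.X with hP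
    have hPdeg : P.natDegree = 2 ^ e := by
      rw [hP]
      compute_degree!
      · rw [if_neg (show ¬(1 = 2 ^ e) by omega)]
        norm_num
      · omega
    have hP0 : P ≠ 0 := by
      intro h
      rw [h, Polynomial.natDegree_zero] at hPdeg
      omega
    have hroot : ∀ y : E, y ^ 2 ^ e = y → y ∈ P.roots.toFinset := by
      intro y hy
      rw [Multiset.mem_toFinset, Polynomial.mem_roots hP0]
      simp [hP, Polynomial.IsRoot, hy]
    have hsub : Finset.univ.image ι ⊆ P.roots.toFinset := by
      intro z hz
      simp only [Finset.mem_image, Finset.mem_univ, true_and] at hz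
      obtain ⟨c, rfl⟩ := hz
      exact hroot _ (hqmap c)
    have hcards : P.roots.toFinset.card ≤ 2 ^ e :=
      le_trans (Multiset.toFinset_card_le _) (by simpa [hPdeg] using Polynomial.card_roots' P)
    have himg : (Finset.univ.image ι).card = 2 ^ e := by
      rw [Finset.card_image_of_injective _ ι.injective, Finset.card_univ, hF]
    have heq := Finset.eq_of_subset_of_card_le hsub (by omega)
    have hxmem := hroot x hx
    rw [← heq] at hxmem
    simp only [Finset.mem_image, Finset.mem_univ, true_and] at hxmem
    exact hxmem
  -- ε^q = ε + 1
  have hA : (ε ^ 2 ^ e) ^ 2 + ε ^ 2 ^ e = ι δ := by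
    have h1 : (ε ^ 2 + ε) ^ 2 ^ e = (ι δ) ^ 2 ^ e := by rw [hεδ]
    rw [hfrob, ← pow_mul, mul_comm, pow_mul, hqmap] at h1
    exact h1
  have hεne : ε ^ 2 ^ e ≠ ε := by
    intro h
    exact hε (key ε h)
  have hfac : (ε ^ 2 ^ e - ε) * (ε ^ 2 ^ e - ε - 1) = 0 := by
    linear_combination hA + hεδ + (ι δ - ε ^ 2 ^ e - ε ^ 2 ^ e * ε) * htwoE
  have hεq : ε ^ 2 ^ e = ε + 1 := by
    rcases mul_eq_zero.mp hfac with h | h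
    · exact absurd (sub_eq_zero.mp h) hεne
    · linear_combination h
  -- algebraic normal forms
  have hsq : ∀ s t : F, (ι s + ε * ι t) ^ 2 = ι (s ^ 2 + δ * t ^ 2) + ε * ι (t ^ 2) := by
    intro s t
    simp only [map_add, map_mul, map_pow]
    linear_combination (ι t) ^ 2 * hεδ + (ε * ι s * ι t - ε * (ι t) ^ 2) * htwoE
  have hxq : ∀ s t : F, (ι s + ε * ι t) ^ 2 ^ e = ι s + (ε + 1) * ι t := by
    intro s t
    rw [hfrob, mul_pow, hεq, hqmap, hqmap]
  have hnorm : ∀ s t : F,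
      (ι s + ε * ι t) ^ (2 ^ e + 1) = ι (s ^ 2 + s * t + δ * t ^ 2) := by
    intro s t
    rw [pow_succ, hxq]
    simp only [map_add, map_mul, map_pow]
    linear_combination (ι t) ^ 2 * hεδ + ε * ι s * ι t * htwoE
  set A' : F := x5 + a0 * (x1 ^ 2 + δ * x2 ^ 2 + x3 ^ 2 + δ * x4 ^ 2)
      + δ * a1 * (x2 ^ 2 + x4 ^ 2)
      + b0 * (x1 ^ 2 + x1 * x2 + δ * x2 ^ 2 + x3 ^ 2 + x3 * x4 + δ * x4 ^ 2) with hA'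
  set B' : F := x6 + a0 * (x2 ^ 2 + x4 ^ 2)
      + a1 * (x1 ^ 2 + x2 ^ 2 + δ * x2 ^ 2 + x3 ^ 2 + x4 ^ 2 + δ * x4 ^ 2)
      + b1 * (x1 ^ 2 + δ * x2 ^ 2 + x1 * x2 + x3 ^ 2 + δ * x4 ^ 2 + x3 * x4) with hB'
  have main : (ι x5 + ε * ι x6)
        + (ι a0 + ε * ι a1) * ((ι x1 + ε * ι x2) ^ 2 + (ι x3 + ε * ι x4) ^ 2)
        + (ι b0 + ε * ι b1) *
            ((ι x1 + ε * ι x2) ^ (2 ^ e + 1) + (ι x3 + ε * ι x4) ^ (2 ^ e + 1))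
      = ι A' + ε * ι B' := by
    rw [hsq x1 x2, hsq x3 x4, hnorm x1 x2, hnorm x3 x4, hA', hB']
    simp only [map_add, map_mul, map_pow]
    linear_combination (ι a1 * (ι x2) ^ 2 + ι a1 * (ι x4) ^ 2) * hεδ
      - (ε * ι a1 * (ι x2) ^ 2 + ε * ι a1 * (ι x4) ^ 2) * htwoE
  rw [main]
  constructor
  · rintro ⟨c, hc⟩
    by_contra hB
    apply hε
    have hBne : ι B' ≠ 0 := fun h => hB (ι.injective (by simpa using h))
    refine ⟨(c - A') / B', ?_⟩
    rw [map_div₀, map_sub, div_eq_iff hBne]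
    linear_combination hc
  · intro hB
    exact ⟨A', by rw [hB, map_zero, mul_zero, add_zero]⟩
end

section
/- Let F be a finite field of order q = 2^e with e ≥ 2, let δ ∈ F satisfy x² + x ≠ δ for all x ∈ F, and let a0, a1, b1 ∈ F with b1 ≠ 0. Then the set {(x0, x1, x2, x3, x4, x6) ∈ F⁶ : x0x6 + a0(x2² + x4²) + a1(x1² + x2² + δx2² + x3² + x4² + δx4²) + b1(x1² + δx2² + x1x2 + x3² + δx4² + x3x4) = 0} has exactly q⁵ + q³ − q² elements. -/
section BMQuadric

variable {F : Type} [Field F] [Fintype F] [DecidableEq F]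

lemma bm_cntA (A B C : F) (hA : A ≠ 0) :
    Fintype.card {p : F × F × F // A * p.1 + B * p.2.1 + C * p.2.2 = 0}
      = Fintype.card F ^ 2 := by
  have e : (F × F) ≃ {p : F × F × F // A * p.1 + B * p.2.1 + C * p.2.2 = 0} :=
  { toFun := fun q => ⟨(-(B * q.1 + C * q.2) / A, q.1, q.2), by field_simp; ring⟩
    invFun := fun p => (p.1.2.1, p.1.2.2)
    left_inv := fun q => rfl
    right_inv := by
      rintro ⟨⟨b, d, f⟩, h⟩
      apply Subtype.ext
      have hb : -(B * d + C * f) / A = b := by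
        field_simp
        linear_combination -h
      simp only [hb] }
  rw [← Fintype.card_congr e, Fintype.card_prod, sq]

lemma bm_cntB (A B C : F) (hA : A = 0) (hB : B ≠ 0) :
    Fintype.card {p : F × F × F // A * p.1 + B * p.2.1 + C * p.2.2 = 0}
      = Fintype.card F ^ 2 := by
  subst hA
  have e : (F × F) ≃ {p : F × F × F // 0 * p.1 + B * p.2.1 + C * p.2.2 = 0} :=
  { toFun := fun q => ⟨(q.1, -(C * q.2) / B, q.2), by field_simp; ring⟩
    invFun := fun p => (p.1.1, p.1.2.2)
    left_inv := fun q => rfl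
    right_inv := by
      rintro ⟨⟨b, d, f⟩, h⟩
      apply Subtype.ext
      have hd : -(C * f) / B = d := by
        field_simp
        linear_combination -h
      simp only [hd] }
  rw [← Fintype.card_congr e, Fintype.card_prod, sq]

lemma bm_cntC (A B C : F) (hA : A = 0) (hB : B = 0) (hC : C ≠ 0) :
    Fintype.card {p : F × F × F // A * p.1 + B * p.2.1 + C * p.2.2 = 0}
      = Fintype.card F ^ 2 := by
  subst hA; subst hB
  have e : (F × F) ≃ {p : F × F × F // 0 * p.1 + 0 * p.2.1 + C * p.2.2 = 0} :=
  { toFun := fun q => ⟨(q.1, q.2, 0), by simp⟩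
    invFun := fun p => (p.1.1, p.1.2.1)
    left_inv := fun q => rfl
    right_inv := by
      rintro ⟨⟨b, d, f⟩, h⟩
      apply Subtype.ext
      have hf : f = 0 := by
        simp only [zero_mul, zero_add] at h
        exact (mul_eq_zero.mp h).resolve_left hC
      simp only [hf] }
  rw [← Fintype.card_congr e, Fintype.card_prod, sq]

lemma bm_cnt0 (A B C : F) (hA : A = 0) (hB : B = 0) (hC : C = 0) :
    Fintype.card {p : F × F × F // A * p.1 + B * p.2.1 + C * p.2.2 = 0}
      = Fintype.card F ^ 3 := by
  subst hA; subst hB; subst hC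
  rw [Fintype.card_congr (Equiv.subtypeUnivEquiv (by intro p; simp))]
  simp [Fintype.card_prod]; ring

def bmSubtypeProdSigma {α β : Type} (P : α → β → Prop) :
    {p : α × β // P p.1 p.2} ≃ Σ a : α, {b : β // P a b} where
  toFun x := ⟨x.1.1, x.1.2, x.2⟩
  invFun x := ⟨(x.1, x.2.1), x.2.2⟩
  left_inv _ := rfl
  right_inv _ := rfl

lemma bm_inner_card (a : F × F × F) :
    Fintype.card {p : F × F × F // a.1 * p.1 + a.2.1 * p.2.1 + a.2.2 * p.2.2 = 0}
      = if a = (0, 0, 0) then Fintype.card F ^ 3 else Fintype.card F ^ 2 := by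
  by_cases h : a = (0, 0, 0)
  · rw [if_pos h]
    exact bm_cnt0 _ _ _ (by rw [h]) (by rw [h]) (by rw [h])
  · rw [if_neg h]
    by_cases h1 : a.1 = 0
    · by_cases h2 : a.2.1 = 0
      · have h3 : a.2.2 ≠ 0 := by
          intro h3; exact h (by rw [Prod.ext_iff, Prod.ext_iff]; exact ⟨h1, h2, h3⟩)
        exact bm_cntC _ _ _ h1 h2 h3
      · exact bm_cntB _ _ _ h1 h2
    · exact bm_cntA _ _ _ h1

lemma bm_std_card (hq : 2 ≤ Fintype.card F) :
    Nat.card {p : (F × F × F) × (F × F × F) //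
        p.1.1 * p.2.1 + p.1.2.1 * p.2.2.1 + p.1.2.2 * p.2.2.2 = 0}
      = Fintype.card F ^ 5 + Fintype.card F ^ 3 - Fintype.card F ^ 2 := by
  set q := Fintype.card F with hqdef
  rw [Nat.card_eq_fintype_card]
  have h1 : Fintype.card {p : (F × F × F) × (F × F × F) //
        p.1.1 * p.2.1 + p.1.2.1 * p.2.2.1 + p.1.2.2 * p.2.2.2 = 0}
      = ∑ a : F × F × F,
        Fintype.card {b : F × F × F // a.1 * b.1 + a.2.1 * b.2.1 + a.2.2 * b.2.2 = 0} := by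
    rw [Fintype.card_congr (bmSubtypeProdSigma
      (fun (a b : F × F × F) => a.1 * b.1 + a.2.1 * b.2.1 + a.2.2 * b.2.2 = 0))]
    rw [Fintype.card_sigma]
  rw [h1]
  simp only [bm_inner_card]
  have hle : q ^ 2 ≤ q ^ 3 := Nat.pow_le_pow_right (by omega) (by omega)
  have h3 : (∑ x : F × F × F, if x = (0, 0, 0) then q ^ 3 else q ^ 2)
      = (∑ x : F × F × F, ((if x = (0, 0, 0) then q ^ 3 - q ^ 2 else 0) + q ^ 2)) := by
    apply Finset.sum_congr rfl
    intro x _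
    by_cases hx : x = ((0:F), (0:F), (0:F))
    · simp [hx, Nat.sub_add_cancel hle]
    · rw [if_neg hx, if_neg hx, zero_add]
  rw [h3, Finset.sum_add_distrib, Finset.sum_const, Finset.sum_ite_eq' Finset.univ
    ((0:F), (0:F), (0:F)) (fun _ => q ^ 3 - q ^ 2)]
  simp only [Finset.mem_univ, if_true, Finset.card_univ, Fintype.card_prod, smul_eq_mul]
  have hcard : q * (q * q) * q ^ 2 = q ^ 5 := by ring
  rw [hcard]
  have h5 : q ^ 2 ≤ q ^ 5 := Nat.pow_le_pow_right (by omega) (by omega)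
  omega

def bmPhi0 (δ a0 a1 b1 : F) (hb : b1 ≠ 0) (h2 : (2:F) = 0) :
    (Fin 6 → F) ≃ ((F × F × F) × (F × F × F)) where
  toFun v := ((v 0, v 1 + v 3, v 2 + v 4),
      (v 5, (a1 + b1) * (v 1 + v 3) + b1 * v 2,
       (a0 + a1 + a1 * δ + b1 * δ) * (v 2 + v 4) + b1 * v 3))
  invFun p := ![p.1.1,
      p.1.2.1 + (p.2.2.2 + (a0 + a1 + a1 * δ + b1 * δ) * p.1.2.2) / b1,
      (p.2.2.1 + (a1 + b1) * p.1.2.1) / b1,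
      (p.2.2.2 + (a0 + a1 + a1 * δ + b1 * δ) * p.1.2.2) / b1,
      p.1.2.2 + (p.2.2.1 + (a1 + b1) * p.1.2.1) / b1,
      p.2.1]
  left_inv v := by
    funext i
    fin_cases i <;>
      simp only [Matrix.cons_val_zero, Matrix.cons_val_one, Matrix.head_cons,
        Matrix.cons_val_two, Matrix.tail_cons, Matrix.cons_val_three,
        Matrix.cons_val_four, Matrix.cons_val_fin_one]
    · rfl
    · show _ = v 1
      show (Matrix.vecCons _ _ : Fin 6 → F) 1 = v 1
      simp only [Matrix.cons_val]
      field_simp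
      linear_combination (b1 * v 3 + b1 * δ * v 2 + b1 * δ * v 4 + δ * v 2 * a1
        + δ * v 4 * a1 + v 2 * a0 + v 2 * a1 + v 4 * a0 + v 4 * a1) * h2
    · show _ = v 2
      show (Matrix.vecCons _ _ : Fin 6 → F) 2 = v 2
      simp only [Matrix.cons_val]
      field_simp
      linear_combination (a1 * v 1 + a1 * v 3 + v 1 * b1 + v 3 * b1) * h2
    · show _ = v 3
      show (Matrix.vecCons _ _ : Fin 6 → F) 3 = v 3
      simp only [Matrix.cons_val]
      field_simp
      linear_combination (a0 * v 2 + a0 * v 4 + v 2 * a1 + v 2 * a1 * δ + v 2 * δ * b1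
        + v 4 * a1 + v 4 * a1 * δ + v 4 * δ * b1) * h2
    · show _ = v 4
      show (Matrix.vecCons _ _ : Fin 6 → F) 4 = v 4
      simp only [Matrix.cons_val]
      field_simp
      linear_combination (v 2 * b1 + b1 * v 1 + b1 * v 3 + v 1 * a1 + v 3 * a1) * h2
    · rfl
  right_inv p := by
    obtain ⟨⟨a, c, e⟩, b, s, t⟩ := p
    simp only [Matrix.cons_val_zero, Matrix.cons_val_one, Matrix.head_cons,
      Matrix.cons_val_two, Matrix.tail_cons, Matrix.cons_val_three,
      Matrix.cons_val_four, Matrix.cons_val_fin_one, Prod.mk.injEq]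
    refine ⟨⟨trivial, ?_, ?_⟩, rfl, ?_, ?_⟩
    · field_simp
      linear_combination (b1 * δ * e + δ * e * a1 + e * a0 + e * a1 + t) * h2
    · field_simp
      linear_combination (s + a1 * c + c * b1) * h2
    · field_simp
      linear_combination (a1 * b1 * c + 2 * a1 * b1 * δ * e + a1 * b1 * e + a1 * e * a0
        + a1 * t + a1 ^ 2 * δ * e + a1 ^ 2 * e + b1 * e * a0 + b1 * t + b1 ^ 2 * c
        + b1 ^ 2 * δ * e) * h2
    · field_simp
      linear_combination (a0 * a1 * c + a0 * c * b1 + a0 * b1 * e + a0 * s + a1 * c * b1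
        + 2 * a1 * c * b1 * δ + a1 * b1 * e + a1 * b1 * e * δ + a1 * s + a1 * s * δ
        + a1 ^ 2 * c + a1 ^ 2 * c * δ + c * b1 ^ 2 * δ + b1 * s * δ + b1 ^ 2 * e * δ) * h2

lemma bm_key (δ a0 a1 b1 : F) (h2 : (2:F) = 0) (v : Fin 6 → F) :
    v 0 * v 5 + (v 1 + v 3) * ((a1 + b1) * (v 1 + v 3) + b1 * v 2)
      + (v 2 + v 4) * ((a0 + a1 + a1 * δ + b1 * δ) * (v 2 + v 4) + b1 * v 3)
    = v 0 * v 5 + a0 * ((v 2) ^ 2 + (v 4) ^ 2)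
        + a1 * ((v 1) ^ 2 + (v 2) ^ 2 + δ * (v 2) ^ 2
            + (v 3) ^ 2 + (v 4) ^ 2 + δ * (v 4) ^ 2)
        + b1 * ((v 1) ^ 2 + δ * (v 2) ^ 2 + v 1 * v 2
            + (v 3) ^ 2 + δ * (v 4) ^ 2 + v 3 * v 4) := by
  linear_combination (v 2 * v 4 * (b1 * δ + a1 + a1 * δ + a0) + v 2 * v 3 * b1
    + v 1 * v 3 * (b1 + a1)) * h2

end BMQuadric

/-- The base quadric of the BC cone `B'` of a BM variety (`q = 2^e` even) has
`q⁵ + q³ − q²` vector solutions, i.e. it is a hyperbolic quadric `Q⁺(5,q)`.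
The coordinates are `(x0, x1, x2, x3, x4, x6) = (v 0, v 1, v 2, v 3, v 4, v 5)`. -/
theorem stmt_9 (e : ℕ) (he : 2 ≤ e)
    (F : Type) [Field F] [Fintype F] (hF : Fintype.card F = 2 ^ e)
    (δ : F) (hδ : ∀ x : F, x ^ 2 + x ≠ δ)
    (a0 a1 b1 : F) (hb : b1 ≠ 0) :
    Nat.card {v : Fin 6 → F |
        v 0 * v 5 + a0 * ((v 2) ^ 2 + (v 4) ^ 2)
          + a1 * ((v 1) ^ 2 + (v 2) ^ 2 + δ * (v 2) ^ 2
              + (v 3) ^ 2 + (v 4) ^ 2 + δ * (v 4) ^ 2)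
          + b1 * ((v 1) ^ 2 + δ * (v 2) ^ 2 + v 1 * v 2
              + (v 3) ^ 2 + δ * (v 4) ^ 2 + v 3 * v 4) = 0}
      = Fintype.card F ^ 5 + Fintype.card F ^ 3 - Fintype.card F ^ 2 := by
  classical
  -- characteristic 2
  have hchar : (2 : F) = 0 := by
    have hinst : CharP F (ringChar F) := ringChar.charP F
    have hprime : (ringChar F).Prime := CharP.char_is_prime F (ringChar F)
    obtain ⟨n, hp', hn⟩ := FiniteField.card F (ringChar F)
    have hdvd : ringChar F ∣ 2 ^ e := by
      rw [← hF, hn]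
      exact dvd_pow_self _ (by positivity)
    have h2 : ringChar F = 2 :=
      (Nat.prime_dvd_prime_iff_eq hprime Nat.prime_two).mp
        (hprime.dvd_of_dvd_pow hdvd)
    have : CharP F 2 := h2 ▸ hinst
    have := CharP.cast_eq_zero F 2
    exact_mod_cast this
  have hq : 2 ≤ Fintype.card F := by
    rw [hF]
    calc 2 ≤ 2 ^ 2 := by norm_num
    _ ≤ 2 ^ e := Nat.pow_le_pow_right (by norm_num) he
  have hiff : ∀ v : Fin 6 → F,
      v ∈ {v : Fin 6 → F |
        v 0 * v 5 + a0 * ((v 2) ^ 2 + (v 4) ^ 2)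
          + a1 * ((v 1) ^ 2 + (v 2) ^ 2 + δ * (v 2) ^ 2
              + (v 3) ^ 2 + (v 4) ^ 2 + δ * (v 4) ^ 2)
          + b1 * ((v 1) ^ 2 + δ * (v 2) ^ 2 + v 1 * v 2
              + (v 3) ^ 2 + δ * (v 4) ^ 2 + v 3 * v 4) = 0} ↔
      ((bmPhi0 δ a0 a1 b1 hb hchar v).1.1 * (bmPhi0 δ a0 a1 b1 hb hchar v).2.1
        + (bmPhi0 δ a0 a1 b1 hb hchar v).1.2.1 * (bmPhi0 δ a0 a1 b1 hb hchar v).2.2.1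
        + (bmPhi0 δ a0 a1 b1 hb hchar v).1.2.2 * (bmPhi0 δ a0 a1 b1 hb hchar v).2.2.2 = 0) := by
    intro v
    rw [Set.mem_setOf_eq]
    show _ ↔ (v 0 * v 5 + (v 1 + v 3) * ((a1 + b1) * (v 1 + v 3) + b1 * v 2)
      + (v 2 + v 4) * ((a0 + a1 + a1 * δ + b1 * δ) * (v 2 + v 4) + b1 * v 3) = 0)
    rw [bm_key δ a0 a1 b1 hchar v]
  have hcong := Nat.card_congr
    ((Equiv.subtypeEquiv (bmPhi0 δ a0 a1 b1 hb hchar) hiff) :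
      {v : Fin 6 → F // v ∈ _} ≃
      {p : (F × F × F) × (F × F × F) //
        p.1.1 * p.2.1 + p.1.2.1 * p.2.2.1 + p.1.2.2 * p.2.2.2 = 0})
  rw [hcong, bm_std_card hq]
end

section
/- Let F be a finite field of order q = 2^e with e ≥ 2, let δ ∈ F satisfy x² + x ≠ δ for all x ∈ F, and let a0, a1, b1 ∈ F with (a0, a1) ≠ (0, 0). Then the set of pairs (μ0, μ1) ∈ F² satisfying the system: (a0+a1)μ1² + (a1+b1)(1+μ0²) + δ(a1+b1)μ1² + b1μ0μ1 = 0, (a0+a1)(1+μ0²+μ1²) + (a1+b1)δ²μ1² + δ(a1+b1)(1+μ0²+μ1²) + δb1μ1(μ0+μ1) = 0, and 1 + μ0² + δμ1² + μ0μ1 = 0, is exactly {(1, 0)}. -/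
/-- The system expressing that the spread line `r(0,1,μ0+εμ1,t)` is contained in
the BC cone `B'` of a BM variety, `q` even: its solution set is `{(1, 0)}`. -/
theorem stmt_10 (e : ℕ) (he : 2 ≤ e)
    (F : Type) [Field F] [Fintype F] (hF : Fintype.card F = 2 ^ e)
    (δ : F) (hδ : ∀ x : F, x ^ 2 + x ≠ δ)
    (a0 a1 b1 : F) (ha : (a0, a1) ≠ (0, 0)) :
    {p : F × F |
        (a0 + a1) * p.2 ^ 2 + (a1 + b1) * (1 + p.1 ^ 2)
            + δ * (a1 + b1) * p.2 ^ 2 + b1 * p.1 * p.2 = 0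
        ∧ (a0 + a1) * (1 + p.1 ^ 2 + p.2 ^ 2) + (a1 + b1) * δ ^ 2 * p.2 ^ 2
            + δ * (a1 + b1) * (1 + p.1 ^ 2 + p.2 ^ 2)
            + δ * b1 * p.2 * (p.1 + p.2) = 0
        ∧ 1 + p.1 ^ 2 + δ * p.2 ^ 2 + p.1 * p.2 = 0}
      = {((1 : F), (0 : F))} := by
  have hcard : ((2 : F)) ^ e = 0 := by
    have h := FiniteField.cast_card_eq_zero F
    rw [hF] at h
    push_cast at h
    exact h
  have two0 : (2 : F) = 0 := by
    have he' : e ≠ 0 := by omega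
    exact pow_eq_zero_iff he' |>.mp hcard
  ext ⟨μ0, μ1⟩
  simp only [Set.mem_setOf_eq, Set.mem_singleton_iff, Prod.mk.injEq]
  constructor
  · rintro ⟨h1, h2, h3⟩
    -- simplified equation 1 : μ1 * ((a0+a1)μ1 + a1 μ0) = 0
    have E1 : μ1 * ((a0 + a1) * μ1 + a1 * μ0) = 0 := by
      linear_combination h1 + (a1 + b1) * h3 -
        ((a1 + b1) * (1 + μ0 ^ 2) + δ * (a1 + b1) * μ1 ^ 2 + b1 * μ0 * μ1) * two0
    -- simplified equation 2
    have E2 : μ1 * ((a0 + a1) * δ * μ1 + (a0 + a1) * μ0 + (a0 + a1) * μ1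
        + δ * a1 * μ0 + δ * a1 * μ1) = 0 := by
      linear_combination h2 + ((a0 + a1) + δ * (a1 + b1)) * h3 -
        (((a0 + a1) + δ * (a1 + b1)) * (1 + μ0 ^ 2)
          + (δ ^ 2 * (a1 + b1) + δ * b1) * μ1 ^ 2 + δ * b1 * μ0 * μ1) * two0
    by_cases hμ1 : μ1 = 0
    · subst hμ1
      have hsq : (μ0 + 1) ^ 2 = 0 := by linear_combination h3 + μ0 * two0
      have h01 : μ0 + 1 = 0 := by
        exact pow_eq_zero_iff (two_ne_zero) |>.mp hsq
      constructor
      · linear_combination h01 - two0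
      · rfl
    · exfalso
      have hA : (a0 + a1) * μ1 + a1 * μ0 = 0 := by
        rcases mul_eq_zero.mp E1 with h | h
        · exact absurd h hμ1
        · exact h
      have hB : (a0 + a1) * δ * μ1 + (a0 + a1) * μ0 + (a0 + a1) * μ1
          + δ * a1 * μ0 + δ * a1 * μ1 = 0 := by
        rcases mul_eq_zero.mp E2 with h | h
        · exact absurd h hμ1
        · exact h
      have hC : a0 * μ0 + δ * a1 * μ1 = 0 := by
        linear_combination hB - (δ + 1) * hA
      by_cases ha1 : a1 = 0
      · have ha0 : a0 ≠ 0 := by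
          intro ha0
          exact ha (by simp [ha0, ha1, Prod.ext_iff])
        have : (a0 + a1) * μ1 = 0 := by linear_combination hA - μ0 * ha1
        rcases mul_eq_zero.mp this with h | h
        · rw [ha1, add_zero] at h
          exact ha0 h
        · exact hμ1 h
      · have key : μ1 * (δ * a1 ^ 2 - a0 * (a0 + a1)) = 0 := by
          linear_combination a1 * hC - a0 * hA
        have hd : δ * a1 ^ 2 = a0 * (a0 + a1) := by
          rcases mul_eq_zero.mp key with h | h
          · exact absurd h hμ1
          · exact sub_eq_zero.mp h
        apply hδ (a0 / a1)
        field_simp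
        linear_combination -hd
  · rintro ⟨h0, h1⟩
    subst h0; subst h1
    refine ⟨?_, ?_, ?_⟩
    · linear_combination (a1 + b1) * two0
    · linear_combination ((a0 + a1) + δ * (a1 + b1)) * two0
    · linear_combination two0
end

section
/- Let q = 2^e with e odd, e ≥ 3, and s = 2^{(e+1)/2}. Define Γ_ε : E → E by Γ_ε(u) = (u + (u^q + u)ε)^{s+2} + (u^q + u)^s + (u^{2q} + u²)ε + u^{q+1} + u². Then for all x1, x2 ∈ F, Γ_ε(ι(x1) + ε·ι(x2)) = ι(x1^{s+2} + x1·x2 + x2^s). -/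
/-- Evaluation of the function `Γ_ε` of the BT variety on `ι x1 + ε ι x2`:
it lands in the subfield `F_q` with value `x1^{s+2} + x1 x2 + x2^s`. -/
theorem stmt_11 (e : ℕ) (he : Odd e) (he3 : 3 ≤ e)
    (q s : ℕ) (hq : q = 2 ^ e) (hs : s = 2 ^ ((e + 1) / 2))
    (F E : Type) [Field F] [Fintype F] [Field E] [Fintype E]
    (hF : Fintype.card F = q) (hE : Fintype.card E = q ^ 2)
    (ι : F →+* E) (δ : F) (ε : E) (hε : ε ∉ Set.range ι)
    (hεδ : ε ^ 2 + ε = ι δ)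
    (Γ : E → E)
    (hΓ : ∀ u : E, Γ u
      = (u + (u ^ q + u) * ε) ^ (s + 2) + (u ^ q + u) ^ s
        + (u ^ (2 * q) + u ^ 2) * ε + u ^ (q + 1) + u ^ 2)
    (x1 x2 : F) :
    Γ (ι x1 + ε * ι x2) = ι (x1 ^ (s + 2) + x1 * x2 + x2 ^ s) := by
  classical
  have hq2 : 2 ≤ q := by subst hq; calc 2 = 2^1 := rfl
                                      _ ≤ 2^e := Nat.pow_le_pow_right (by norm_num) (by omega)
  -- characteristic 2
  have h2 : (2 : E) = 0 := by
    have h := FiniteField.cast_card_eq_zero E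
    rw [hE, hq] at h
    have h' : ((2:ℕ) : E) ^ (e * 2) = 0 := by push_cast at h ⊢; rw [← pow_mul] at h; exact_mod_cast h
    have := pow_eq_zero_iff (by positivity : e * 2 ≠ 0) |>.mp h'
    exact_mod_cast this
  haveI hchar : CharP E 2 := by
    have hr : ringChar E = 2 := by
      have hp := CharP.char_is_prime E (ringChar E)
      have hd : ringChar E ∣ 2 := (ringChar.spec E 2).mp (by exact_mod_cast h2)
      rcases (Nat.dvd_prime Nat.prime_two).mp hd with h|h
      · exact absurd h hp.ne_one
      · exact h
    rw [← hr]; exact ringChar.charP E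
  -- Frobenius q is additive
  have hfrob : ∀ x y : E, (x + y) ^ q = x ^ q + y ^ q := by
    haveI := Fact.mk Nat.prime_two
    intro x y; rw [hq]; exact add_pow_char_pow x y 2 e
  -- elements of ι(F) are fixed by x ↦ x^q
  have hFfix : ∀ x : F, (ι x) ^ q = ι x := fun x => by
    rw [← map_pow, ← hF, FiniteField.pow_card]
  -- ε^q = ε + 1
  have hεq : ε ^ q = ε + 1 := by
    set c : E := ε ^ q + ε with hc
    have hε2 : ε ^ 2 = ε + ι δ := by linear_combination hεδ - ε * h2
    have hcc : c ^ 2 = c := by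
      have e1 : c ^ 2 = (ε ^ q) ^ 2 + ε ^ 2 := by rw [hc]; linear_combination (ε ^ q * ε) * h2
      have e2 : (ε ^ q) ^ 2 = (ε ^ 2) ^ q := by rw [← pow_mul, ← pow_mul, mul_comm]
      have e3 : (ε ^ 2) ^ q = ε ^ q + ι δ := by rw [hε2, hfrob, hFfix]
      rw [e1, e2, e3, hε2, hc]; linear_combination (ι δ) * h2
    have hcne : c ≠ 0 := by
      intro h0
      have hfix : ε ^ q = ε := by
        have : ε ^ q + ε = 0 := by rw [← hc, h0]
        linear_combination this - ε * h2
      -- root counting for X^q - X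
      set p : Polynomial E := Polynomial.X ^ q - Polynomial.X with hp
      have hdeg : p.natDegree = q := by
        rw [hp, Polynomial.natDegree_sub_eq_left_of_natDegree_lt]
        · exact Polynomial.natDegree_X_pow q
        · rw [Polynomial.natDegree_X, Polynomial.natDegree_X_pow]; omega
      have hp0 : p ≠ 0 := by
        intro h; rw [h, Polynomial.natDegree_zero] at hdeg; omega
      have hroots : ∀ x : E, x ^ q = x → x ∈ p.roots.toFinset := by
        intro x hx
        rw [Multiset.mem_toFinset, Polynomial.mem_roots hp0]
        simp [hp, Polynomial.IsRoot, hx]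
      set T : Finset E := insert ε ((Finset.univ : Finset F).image ι) with hT
      have hTsub : T ⊆ p.roots.toFinset := by
        intro x hx
        rw [hT, Finset.mem_insert] at hx
        rcases hx with rfl | hx
        · exact hroots x hfix
        · obtain ⟨a, _, rfl⟩ := Finset.mem_image.mp hx
          exact hroots _ (hFfix a)
      have hTcard : T.card = q + 1 := by
        rw [hT, Finset.card_insert_of_notMem]
        · rw [Finset.card_image_of_injective _ ι.injective, Finset.card_univ, hF]
        · intro hmem
          obtain ⟨a, _, ha⟩ := Finset.mem_image.mp hmem
          exact hε ⟨a, ha⟩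
      have : T.card ≤ q := by
        calc T.card ≤ p.roots.toFinset.card := Finset.card_le_card hTsub
          _ ≤ Multiset.card p.roots := p.roots.toFinset_card_le
          _ ≤ p.natDegree := Polynomial.card_roots' p
          _ = q := hdeg
      omega
    have hc1 : c = 1 := by
      have := mul_left_cancel₀ hcne (by rw [mul_one]; linear_combination hcc : c * c = c * 1)
      exact this
    linear_combination hc1 - ε * h2
  -- main computation
  rw [hΓ]
  set u : E := ι x1 + ε * ι x2 with hu
  have huq : u ^ q = u + ι x2 := by
    rw [hu, hfrob, mul_pow, hεq, hFfix, hFfix]; ring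
  have h2q : u ^ (2 * q) = (u ^ q) ^ 2 := by rw [mul_comm, pow_mul]
  have hq1 : u ^ (q + 1) = u ^ q * u := pow_succ u q
  rw [h2q, hq1, huq]
  have e1 : u + (u + ι x2 + u) * ε = ι x1 := by
    rw [hu]; linear_combination ((ι x1 + ε * ι x2) * ε + ε * ι x2) * h2
  have e2 : u + ι x2 + u = ι x2 := by linear_combination u * h2
  rw [e1, e2, map_add, map_add, map_pow, map_pow, map_mul, hu]
  linear_combination ((ι x1 + ε * ι x2) * ι x2 * ε + (ι x1 + ε * ι x2) ^ 2 + (ι x2) ^ 2 * ε + 2 * ι x1 * ι x2 * ε ^ 2 + ι x1 ^ 2 * ε + ι x2 ^ 2 * ε ^ 3) * h2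
end

section
/- Let q = 2^e with e odd, e ≥ 3, and s = 2^{(e+1)/2}. Define Γ_ε : E → E by Γ_ε(u) = (u + (u^q + u)ε)^{s+2} + (u^q + u)^s + (u^{2q} + u²)ε + u^{q+1} + u². For all x1, x2, x3, x4, x5, x6 ∈ F, setting x = ι(x1) + ε·ι(x2), y = ι(x3) + ε·ι(x4), z = ι(x5) + ε·ι(x6), one has z^q + z = Γ_ε(x) + Γ_ε(y) in E if and only if x6 = x1^{s+2} + x1x2 + x2^s + x3^{s+2} + x3x4 + x4^s in F. -/
/-- Barlotti–Cofman representation of the affine part of the BT variety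
`V³_ε : Z^q + Z = Γ_ε(X) + Γ_ε(Y)`, yielding the hypersurface
`C³_ε : x6 = x1^{s+2} + x1x2 + x2^s + x3^{s+2} + x3x4 + x4^s`. -/
theorem stmt_12 (e : ℕ) (he : Odd e) (he3 : 3 ≤ e)
    (q s : ℕ) (hq : q = 2 ^ e) (hs : s = 2 ^ ((e + 1) / 2))
    (F E : Type) [Field F] [Fintype F] [Field E] [Fintype E]
    (hF : Fintype.card F = q) (hE : Fintype.card E = q ^ 2)
    (ι : F →+* E) (δ : F) (ε : E) (hε : ε ∉ Set.range ι)
    (hεδ : ε ^ 2 + ε = ι δ)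
    (Γ : E → E)
    (hΓ : ∀ u : E, Γ u
      = (u + (u ^ q + u) * ε) ^ (s + 2) + (u ^ q + u) ^ s
        + (u ^ (2 * q) + u ^ 2) * ε + u ^ (q + 1) + u ^ 2)
    (x1 x2 x3 x4 x5 x6 : F) :
    (ι x5 + ε * ι x6) ^ q + (ι x5 + ε * ι x6)
        = Γ (ι x1 + ε * ι x2) + Γ (ι x3 + ε * ι x4)
    ↔ x6 = x1 ^ (s + 2) + x1 * x2 + x2 ^ s
        + x3 ^ (s + 2) + x3 * x4 + x4 ^ s := by
  classical
  -- characteristic 2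
  haveI hcF : CharP F 2 := by
    haveI := ringChar.charP F
    obtain ⟨n, hp, hcard⟩ := FiniteField.card F (ringChar F)
    have hdvd : ringChar F ∣ 2 ^ e := by
      rw [← hq, ← hF, hcard]; exact dvd_pow_self _ n.ne_zero
    have h2 : ringChar F = 2 :=
      (Nat.prime_dvd_prime_iff_eq hp Nat.prime_two).1 (hp.dvd_of_dvd_pow hdvd)
    rw [← h2]; exact ringChar.charP F
  haveI hcE : CharP E 2 := charP_of_injective_ringHom ι.injective 2
  haveI : Fact (Nat.Prime 2) := ⟨Nat.prime_two⟩
  have h2E : (2 : E) = 0 := by exact_mod_cast (CharP.cast_eq_zero E 2)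
  have hq2 : 2 ≤ q := by
    rw [hq]; calc 2 = 2 ^ 1 := rfl
      _ ≤ 2 ^ e := Nat.pow_le_pow_right (by norm_num) (by omega)
  -- Frobenius fixes F
  have hpowF : ∀ c : F, c ^ q = c := fun c => by rw [← hF]; exact FiniteField.pow_card c
  have hpow : ∀ c : F, (ι c) ^ q = ι c := fun c => by rw [← map_pow, hpowF]
  -- additive Frobenius in E
  have hfrob : ∀ a b : E, (a + b) ^ q = a ^ q + b ^ q := fun a b => by
    rw [hq]; exact add_pow_char_pow ..
  -- ε ^ q = ε + 1
  have hεq : ε ^ q = ε + 1 := by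
    have h1 : (ε ^ q) ^ 2 + ε ^ q = ι δ := by
      have := congrArg (· ^ q) hεδ
      rw [hfrob, ← pow_mul, mul_comm 2 q, pow_mul, hpow] at this
      exact this
    set t : E := ε ^ q + ε with ht
    have ht2 : t ^ 2 + t = 0 := by
      rw [ht]; linear_combination h1 + hεδ + (ι δ + ε * ε ^ q) * h2E
    have hcases : t = 0 ∨ t = 1 := by
      rcases mul_eq_zero.1 (show t * (t + 1) = 0 by linear_combination ht2) with h | h
      · exact Or.inl h
      · right; linear_combination h - h2E
    rcases hcases with h | h
    · exfalso
      have hεfix : ε ^ q = ε := by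
        have : ε ^ q = ε + t := by rw [ht]; linear_combination (-ε) * h2E
        rw [this, h, add_zero]
      -- counting roots of X^q - X
      apply hε
      set f : Polynomial E := Polynomial.X ^ q - Polynomial.X with hf
      have hdeg : f.natDegree = q := by
        rw [hf, Polynomial.natDegree_sub_eq_left_of_natDegree_lt]
        · exact Polynomial.natDegree_X_pow q
        · rw [Polynomial.natDegree_X, Polynomial.natDegree_X_pow]; omega
      have hfne : f ≠ 0 := fun h0 => by simp [h0] at hdeg; omega
      set S : Finset E := insert ε (Finset.univ.image ι) with hS
      by_contra hmem
      have hεnot : ε ∉ Finset.univ.image ι := by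
        intro h'
        obtain ⟨c, _, hc⟩ := Finset.mem_image.1 h'
        exact hmem ⟨c, hc⟩
      have hcardS : S.card = q + 1 := by
        rw [hS, Finset.card_insert_of_notMem hεnot,
          Finset.card_image_of_injective _ ι.injective, Finset.card_univ, hF]
      have hsub : S ⊆ f.roots.toFinset := by
        intro x hx
        rw [Multiset.mem_toFinset, Polynomial.mem_roots hfne]
        rcases Finset.mem_insert.1 hx with h' | h'
        · subst h'
          simp [hf, hεfix]
        · obtain ⟨c, _, hc⟩ := Finset.mem_image.1 h'
          subst hc
          simp [hf, hpow]
      have hle : f.roots.toFinset.card ≤ q := by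
        calc f.roots.toFinset.card ≤ Multiset.card f.roots := f.roots.toFinset_card_le
          _ ≤ f.natDegree := f.card_roots'
          _ = q := hdeg
      have := Finset.card_le_card hsub
      omega
    · rw [ht] at h; linear_combination h - ε * h2E
  -- the key computation for Γ
  have key : ∀ a b : F, Γ (ι a + ε * ι b) = ι (a ^ (s + 2) + a * b + b ^ s) := by
    intro a b
    set u : E := ι a + ε * ι b with hu
    have huq : u ^ q = u + ι b := by
      rw [hu, hfrob, hpow, mul_pow, hpow, hεq]; ring
    have h1 : u + (u ^ q + u) * ε = ι a := by
      rw [huq, hu]; ring_nf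
      linear_combination (ε * ι b + ε * ι a + ε ^ 2 * ι b) * h2E
    have h2 : u ^ q + u = ι b := by
      rw [huq]; linear_combination u * h2E
    have h3 : u ^ (2 * q) + u ^ 2 = (ι b) ^ 2 := by
      rw [mul_comm 2 q, pow_mul, huq]
      linear_combination (u * ι b + u ^ 2) * h2E
    have h4 : u ^ (q + 1) + u ^ 2 = ι b * u := by
      rw [pow_succ, huq]; linear_combination u ^ 2 * h2E
    rw [hΓ, show (u + (u ^ q + u) * ε) ^ (s + 2) + (u ^ q + u) ^ s
        + (u ^ (2 * q) + u ^ 2) * ε + u ^ (q + 1) + u ^ 2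
      = (u + (u ^ q + u) * ε) ^ (s + 2) + (u ^ q + u) ^ s
        + (u ^ (2 * q) + u ^ 2) * ε + (u ^ (q + 1) + u ^ 2) by ring,
      h1, h2, h3, h4, hu]
    push_cast [map_add, map_mul, map_pow]
    linear_combination (ε * (ι b) ^ 2) * h2E
  -- the left-hand side
  have hlhs : (ι x5 + ε * ι x6) ^ q + (ι x5 + ε * ι x6) = ι x6 := by
    rw [hfrob, hpow, mul_pow, hpow, hεq]
    linear_combination (ι x5 + ε * ι x6) * h2E
  rw [hlhs, key, key, ← map_add, ι.injective.eq_iff]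
  constructor
  · intro h; rw [h]; ring
  · intro h; rw [h]; ring
end

section
/- Let e be an odd positive integer and let F be a finite field with 2^e elements. Then the map F → F sending x to x^{2^{(e+1)/2} + 2} is bijective. -/
/-- Key arithmetic fact: `2^(k+1) + 2` is coprime to `2^(2k+1) - 1`. -/
lemma coprime_aux (k : ℕ) : Nat.Coprime (2 ^ (k + 1) + 2) (2 ^ (2 * k + 1) - 1) := by
  set d := Nat.gcd (2 ^ (k + 1) + 2) (2 ^ (2 * k + 1) - 1) with hd
  have h1 : (d : ℤ) ∣ 2 ^ (k + 1) + 2 := by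
    exact_mod_cast Int.natCast_dvd_natCast.mpr (Nat.gcd_dvd_left _ _)
  have h2' : d ∣ 2 ^ (2 * k + 1) - 1 := Nat.gcd_dvd_right _ _
  have h2 : (d : ℤ) ∣ 2 ^ (2 * k + 1) - 1 := by
    have : ((2 ^ (2 * k + 1) - 1 : ℕ) : ℤ) = 2 ^ (2 * k + 1) - 1 := by
      push_cast [Nat.one_le_two_pow]; ring
    rw [← this]
    exact_mod_cast h2'
  -- d is odd
  have hodd : ¬ (2 ∣ d) := by
    intro h
    have : 2 ∣ 2 ^ (2 * k + 1) - 1 := h.trans h2'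
    have h1le : 1 ≤ 2 ^ (2 * k + 1) := Nat.one_le_two_pow
    omega
  have hcd : Nat.Coprime d 2 := by
    exact Nat.coprime_comm.mp ((Nat.Prime.coprime_iff_not_dvd Nat.prime_two).mpr hodd)
  have hoddZ : IsCoprime (d : ℤ) 2 := by
    exact_mod_cast Nat.isCoprime_iff_coprime.mpr hcd
  -- d ∣ 2^k + 1
  have h3 : (d : ℤ) ∣ 2 ^ k + 1 := by
    have : (d : ℤ) ∣ 2 * (2 ^ k + 1) := by
      have : (2 : ℤ) ^ (k + 1) + 2 = 2 * (2 ^ k + 1) := by ring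
      rwa [this] at h1
    exact hoddZ.dvd_of_dvd_mul_left this
  -- d ∣ 2^(2k+1) - 2
  have h4 : (d : ℤ) ∣ 2 ^ (2 * k + 1) - 2 := by
    have : (2 : ℤ) ^ (2 * k + 1) - 2 = 2 * (2 ^ k + 1) * (2 ^ k - 1) := by
      rw [pow_succ, mul_comm 2 k, pow_mul]; ring
    rw [this]
    exact Dvd.dvd.mul_right (Dvd.dvd.mul_left h3 2) _
  have h5 : (d : ℤ) ∣ 1 := by
    have := dvd_sub h2 h4
    simpa using this
  have := Int.eq_one_of_dvd_one (by positivity) h5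
  exact_mod_cast this

/-- For `e` odd, the power map `x ↦ x^{2^{(e+1)/2} + 2}` is a bijection of the
field with `2^e` elements. -/
theorem stmt_13 (e : ℕ) (he : Odd e) (he0 : 0 < e)
    (F : Type) [Field F] [Fintype F] (hF : Fintype.card F = 2 ^ e) :
    Function.Bijective (fun x : F => x ^ (2 ^ ((e + 1) / 2) + 2)) := by
  obtain ⟨k, hk⟩ := he
  have hm : (e + 1) / 2 = k + 1 := by omega
  set n := 2 ^ ((e + 1) / 2) + 2 with hn
  have hcop : Nat.Coprime n (Nat.card Fˣ) := by
    rw [Nat.card_units, Nat.card_eq_fintype_card, hF, hn, hm]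
    have : e = 2 * k + 1 := by omega
    rw [this]
    exact coprime_aux k
  have hbij : Function.Bijective (fun u : Fˣ => u ^ n) :=
    Nat.Coprime.pow_left_bijective hcop.symm
  have hn0 : n ≠ 0 := by positivity
  constructor
  · intro x y hxy
    simp only at hxy
    rcases eq_or_ne x 0 with rfl | hx
    · rcases eq_or_ne y 0 with rfl | hy
      · rfl
      · exfalso; rw [zero_pow hn0] at hxy
        exact hy (pow_eq_zero_iff hn0 |>.mp hxy.symm)
    · rcases eq_or_ne y 0 with rfl | hy
      · exfalso; rw [zero_pow hn0] at hxy
        exact hx (pow_eq_zero_iff hn0 |>.mp hxy)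
      · lift x to Fˣ using isUnit_iff_ne_zero.mpr hx
        lift y to Fˣ using isUnit_iff_ne_zero.mpr hy
        have : (x ^ n : F) = (y ^ n : F) := hxy
        rw [← Units.val_pow_eq_pow_val, ← Units.val_pow_eq_pow_val] at this
        exact congrArg Units.val (hbij.injective (Units.ext this))
  · exact Finite.surjective_of_injective (by
      intro x y hxy
      simp only at hxy
      rcases eq_or_ne x 0 with rfl | hx
      · rcases eq_or_ne y 0 with rfl | hy
        · rfl
        · exfalso; rw [zero_pow hn0] at hxy
          exact hy (pow_eq_zero_iff hn0 |>.mp hxy.symm)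
      · rcases eq_or_ne y 0 with rfl | hy
        · exfalso; rw [zero_pow hn0] at hxy
          exact hx (pow_eq_zero_iff hn0 |>.mp hxy)
        · lift x to Fˣ using isUnit_iff_ne_zero.mpr hx
          lift y to Fˣ using isUnit_iff_ne_zero.mpr hy
          have : (x ^ n : F) = (y ^ n : F) := hxy
          rw [← Units.val_pow_eq_pow_val, ← Units.val_pow_eq_pow_val] at this
          exact congrArg Units.val (hbij.injective (Units.ext this)))
end

section
/- Let F be a finite field of order q = 2^e with e odd, e ≥ 3, and let s = 2^{(e+1)/2}. Then the set {(x0, x1, x2, x3, x4, x6) ∈ F⁶ : x0^{s+1}·x6 = x1^{s+2} + x0^s·x1x2 + x0²·x2^s + x3^{s+2} + x0^s·x3x4 + x0²·x4^s} has exactly q⁵ elements. -/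
/-- The homogeneous BC hypersurface of the BT variety restricted to `x5 = 0`
has exactly `q⁵` vector solutions. The coordinates are
`(x0, x1, x2, x3, x4, x6) = (v 0, v 1, v 2, v 3, v 4, v 5)`. -/
theorem stmt_15 (e : ℕ) (he : Odd e) (he3 : 3 ≤ e)
    (s : ℕ) (hs : s = 2 ^ ((e + 1) / 2))
    (F : Type) [Field F] [Fintype F] (hF : Fintype.card F = 2 ^ e) :
    Nat.card {v : Fin 6 → F |
        (v 0) ^ (s + 1) * v 5
          = (v 1) ^ (s + 2) + (v 0) ^ s * (v 1) * (v 2) + (v 0) ^ 2 * (v 2) ^ s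
            + (v 3) ^ (s + 2) + (v 0) ^ s * (v 3) * (v 4) + (v 0) ^ 2 * (v 4) ^ s}
      = Fintype.card F ^ 5 := by
  classical
  obtain ⟨m, hm⟩ := he
  have hm1 : 1 ≤ m := by omega
  have hs' : s = 2 ^ (m + 1) := by rw [hs]; congr 1; omega
  have hspos : 0 < s := by rw [hs']; positivity
  -- characteristic 2
  have hchar : ringChar F = 2 := by
    have h1 : ringChar F ∣ Fintype.card F := by
      rw [← CharP.cast_eq_zero_iff F (ringChar F)]
      exact FiniteField.cast_card_eq_zero F
    have hp : (ringChar F).Prime := CharP.char_is_prime F (ringChar F)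
    rw [hF] at h1
    exact (Nat.prime_dvd_prime_iff_eq hp Nat.prime_two).mp (hp.dvd_of_dvd_pow h1)
  haveI : CharP F 2 := hchar ▸ ringChar.charP F
  have haddself : ∀ x : F, x + x = 0 := fun x => CharTwo.add_self_eq_zero x
  -- coprimality of s+2 with q-1
  have hcop : Nat.Coprime (s + 2) (Fintype.card F - 1) := by
    rw [hF, hm, hs']
    have h2 : (2 : ℕ) ^ (m + 1) + 2 = 2 * (2 ^ m + 1) := by ring
    rw [h2]
    have hodd : Odd (2 ^ (2 * m + 1) - 1) :=
      Nat.Even.sub_odd (Nat.one_le_two_pow) (Nat.even_pow.mpr ⟨even_two, by omega⟩) odd_one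
    refine Nat.Coprime.mul (Nat.coprime_two_left.mpr hodd) ?_
    obtain ⟨b, hb⟩ : ∃ b, 2 ^ m = b + 1 := ⟨2 ^ m - 1, by have := Nat.one_le_two_pow (n := m); omega⟩
    have key : 2 ^ (2 * m + 1) - 1 = 1 + (2 ^ m + 1) * (2 * b) := by
      have h3 : (2 : ℕ) ^ (2 * m + 1) = 2 * 2 ^ m * 2 ^ m := by
        have hmm : 2 * m + 1 = m + m + 1 := by ring
        rw [hmm, pow_succ, pow_add]; ring
      rw [Nat.sub_eq_iff_eq_add (Nat.one_le_two_pow), h3, hb]; ring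
    rw [key, Nat.coprime_add_mul_left_right]
    exact Nat.coprime_one_right _
  -- injectivity of x ↦ x^(s+2)
  have hunits : (Nat.card Fˣ).Coprime (s + 2) := by
    rw [Nat.card_eq_fintype_card, Fintype.card_units]
    exact hcop.symm
  have pinj : ∀ x y : F, x ^ (s + 2) = y ^ (s + 2) → x = y := by
    intro x y h
    rcases eq_or_ne x 0 with rfl | hx
    · rcases eq_or_ne y 0 with rfl | hy
      · rfl
      · rw [zero_pow (by omega), eq_comm, pow_eq_zero_iff (by omega)] at h
        exact (hy h).elim
    · rcases eq_or_ne y 0 with rfl | hy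
      · rw [zero_pow (by omega), pow_eq_zero_iff (by omega)] at h
        exact (hx h).elim
      · have huv : Units.mk0 x hx ^ (s + 2) = Units.mk0 y hy ^ (s + 2) :=
          Units.ext (by simpa using h)
        have := (powCoprime hunits).injective huv
        simpa using congrArg Units.val this
  -- the bijection with F^5
  set P : (Fin 6 → F) → Prop := fun v =>
    (v 0) ^ (s + 1) * v 5
      = (v 1) ^ (s + 2) + (v 0) ^ s * (v 1) * (v 2) + (v 0) ^ 2 * (v 2) ^ s
        + (v 3) ^ (s + 2) + (v 0) ^ s * (v 3) * (v 4) + (v 0) ^ 2 * (v 4) ^ s with hP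
  have hPzero : ∀ v : Fin 6 → F, v 0 = 0 → P v → v 3 = v 1 := by
    intro v h0 hv
    rw [hP] at hv
    simp only [h0, zero_pow (by omega : s + 1 ≠ 0), zero_pow (by omega : s ≠ 0),
      zero_pow (by norm_num : (2:ℕ) ≠ 0), zero_mul, mul_zero, add_zero, zero_add] at hv
    have h3 : v 1 ^ (s + 2) = v 3 ^ (s + 2) := by
      have h4 : v 1 ^ (s + 2) = -(v 3 ^ (s + 2)) := add_eq_zero_iff_eq_neg.mp hv.symm
      rw [h4, CharTwo.neg_eq]
    exact (pinj _ _ h3).symm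
  let φ : {v : Fin 6 → F | P v} → (Fin 5 → F) := fun v =>
    if v.1 0 = 0 then ![0, v.1 1, v.1 2, v.1 4, v.1 5] else ![v.1 0, v.1 1, v.1 2, v.1 3, v.1 4]
  have hbij : Function.Bijective φ := by
    constructor
    · rintro ⟨v, hv⟩ ⟨u, hu⟩ h
      simp only [φ] at h
      split_ifs at h with h1 h2 h2
      · -- both x0 = 0
        have e1 : v 1 = u 1 := congrFun h 1
        have e2 : v 2 = u 2 := congrFun h 2
        have e4 : v 4 = u 4 := congrFun h 3
        have e5 : v 5 = u 5 := congrFun h 4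
        have e3 : v 3 = u 3 := by
          rw [hPzero v h1 hv, hPzero u h2 hu, e1]
        refine Subtype.ext (funext fun i => ?_)
        fin_cases i
        · exact h1.trans h2.symm
        · exact e1
        · exact e2
        · exact e3
        · exact e4
        · exact e5
      · exact absurd ((congrFun h 0 : (0 : F) = u 0)).symm h2
      · exact absurd (congrFun h 0 : v 0 = 0) h1
      · -- both x0 ≠ 0
        have e0 : v 0 = u 0 := congrFun h 0
        have e1 : v 1 = u 1 := congrFun h 1
        have e2 : v 2 = u 2 := congrFun h 2
        have e3 : v 3 = u 3 := congrFun h 3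
        have e4 : v 4 = u 4 := congrFun h 4
        have e5 : v 5 = u 5 := by
          rw [hP] at hv hu
          apply mul_left_cancel₀ (pow_ne_zero (s + 1) h1)
          rw [hv, e0, e1, e2, e3, e4, hu]
        refine Subtype.ext (funext fun i => ?_)
        fin_cases i
        · exact e0
        · exact e1
        · exact e2
        · exact e3
        · exact e4
        · exact e5
    · intro w
      by_cases hw : w 0 = 0
      · refine ⟨⟨![0, w 1, w 2, w 1, w 3, w 4], ?_⟩, ?_⟩
        · show (0 : F) ^ (s + 1) * w 4
            = (w 1) ^ (s + 2) + (0 : F) ^ s * (w 1) * (w 2) + (0 : F) ^ 2 * (w 2) ^ s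
              + (w 1) ^ (s + 2) + (0 : F) ^ s * (w 1) * (w 3) + (0 : F) ^ 2 * (w 3) ^ s
          simp only [zero_pow (by omega : s + 1 ≠ 0), zero_pow (by omega : s ≠ 0),
            zero_pow (by norm_num : (2:ℕ) ≠ 0), zero_mul, mul_zero, add_zero, zero_add]
          exact (haddself _).symm
        · simp only [φ]
          simp only [Matrix.cons_val_zero]
          rw [if_true]
          funext i
          fin_cases i
          · exact hw.symm
          · rfl
          · rfl
          · rfl
          · rfl
      · refine ⟨⟨![w 0, w 1, w 2, w 3, w 4,
            (w 0 ^ (s + 1))⁻¹ * ((w 1) ^ (s + 2) + (w 0) ^ s * (w 1) * (w 2)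
              + (w 0) ^ 2 * (w 2) ^ s + (w 3) ^ (s + 2) + (w 0) ^ s * (w 3) * (w 4)
              + (w 0) ^ 2 * (w 4) ^ s)], ?_⟩, ?_⟩
        · show (w 0) ^ (s + 1) * ((w 0 ^ (s + 1))⁻¹ * ((w 1) ^ (s + 2) + (w 0) ^ s * (w 1) * (w 2)
              + (w 0) ^ 2 * (w 2) ^ s + (w 3) ^ (s + 2) + (w 0) ^ s * (w 3) * (w 4)
              + (w 0) ^ 2 * (w 4) ^ s))
            = (w 1) ^ (s + 2) + (w 0) ^ s * (w 1) * (w 2) + (w 0) ^ 2 * (w 2) ^ s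
              + (w 3) ^ (s + 2) + (w 0) ^ s * (w 3) * (w 4) + (w 0) ^ 2 * (w 4) ^ s
          rw [mul_inv_cancel_left₀ (pow_ne_zero (s + 1) hw)]
        · simp only [φ]
          simp only [Matrix.cons_val_zero]
          simp only [hw, ↓reduceIte]
          funext i
          fin_cases i
          · rfl
          · rfl
          · rfl
          · rfl
          · rfl
  calc Nat.card {v : Fin 6 → F | P v} = Nat.card (Fin 5 → F) := Nat.card_eq_of_bijective φ hbij
    _ = Fintype.card F ^ 5 := by
        rw [Nat.card_eq_fintype_card, Fintype.card_fun]
        simp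
end

section
/- Let F be a finite field of order q = 2^e with e odd, e ≥ 3, let s = 2^{(e+1)/2}, and let δ ∈ F with δ ≠ 0. For all k0, k1 ∈ F, one has ((k0·X + δ·k1)^{s+2} = X^{s+2} for every X ∈ F) if and only if k0 = 1 and k1 = 0. -/
/-- Algebraic core of the determination of the spread lines contained in the BC
hypersurface of the BT variety: `(k0·X + δ·k1)^{s+2} = X^{s+2}` identically in
`X` iff `k0 = 1` and `k1 = 0`. -/
theorem stmt_16 (e : ℕ) (he : Odd e) (he3 : 3 ≤ e)
    (s : ℕ) (hs : s = 2 ^ ((e + 1) / 2))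
    (F : Type) [Field F] [Fintype F] (hF : Fintype.card F = 2 ^ e)
    (δ : F) (hδ : δ ≠ 0) (k0 k1 : F) :
    (∀ X : F, (k0 * X + δ * k1) ^ (s + 2) = X ^ (s + 2))
    ↔ k0 = 1 ∧ k1 = 0 := by
  constructor
  · intro h
    -- characteristic 2
    have hcard : ((Fintype.card F : ℕ) : F) = 0 := FiniteField.cast_card_eq_zero F
    have h2 : (2 : F) = 0 := by
      rw [hF] at hcard
      push_cast at hcard
      exact pow_eq_zero_iff (by omega) |>.mp hcard
    -- k1 = 0
    have hk1 : k1 = 0 := by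
      have h0 := h 0
      rw [mul_zero, zero_add, zero_pow (by omega)] at h0
      rcases pow_eq_zero_iff (n := s + 2) (by omega) |>.mp h0 |> mul_eq_zero.mp with h' | h'
      · exact absurd h' hδ
      · exact h'
    subst hk1
    have hk0 : k0 ^ (s + 2) = 1 := by
      have h1 := h 1
      simpa using h1
    -- arithmetic setup
    obtain ⟨a, rfl⟩ := he
    have ha : 1 ≤ a := by omega
    have hsval : s = 2 * 2 ^ a := by
      rw [hs]
      have : (2 * a + 1 + 1) / 2 = a + 1 := by omega
      rw [this, pow_succ, mul_comm]
    set m : ℕ := 2 ^ a with hm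
    have hm2 : 2 ≤ m := by
      calc 2 = 2 ^ 1 := rfl
      _ ≤ 2 ^ a := Nat.pow_le_pow_right (by norm_num) ha
    have hexp : s + 2 = 2 * (m + 1) := by omega
    rw [hexp] at hk0
    -- y := k0^(m+1) satisfies y^2 = 1, hence y = 1 in char 2
    have hy : (k0 ^ (m + 1)) ^ 2 = 1 := by rw [← pow_mul, mul_comm]; exact hk0
    have hy1 : k0 ^ (m + 1) = 1 := by
      have hsq : (k0 ^ (m + 1) - 1) ^ 2 = 0 := by linear_combination hy + (1 - k0 ^ (m + 1)) * h2
      have := pow_eq_zero_iff (n := 2) (by norm_num) |>.mp hsq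
      exact sub_eq_zero.mp this
    have hk0ne : k0 ≠ 0 := by
      intro h0
      rw [h0, zero_pow (by omega)] at hy1
      exact zero_ne_one hy1
    have hbig : k0 ^ ((m + 1) * (m + 1)) = 1 := by
      rw [pow_mul, hy1, one_pow]
    have key : m * m + 2 * (m + 1) = (m + 1) * (m + 1) + 1 := by ring
    have hmm : k0 ^ (m * m) = k0 := by
      have h1 : k0 ^ (m * m) * k0 ^ (2 * (m + 1)) = k0 ^ ((m + 1) * (m + 1)) * k0 := by
        rw [← pow_add, key, pow_succ]
      rwa [hk0, hbig, mul_one, one_mul] at h1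
    have hmme : 2 ^ (2 * a + 1) = (m * m) * 2 := by
      rw [hm, ← pow_add, ← two_mul, pow_succ]
    have hsq2 : k0 ^ (2 ^ (2 * a + 1)) = k0 ^ 2 := by
      rw [hmme, pow_mul, hmm]
    have hq : k0 ^ (2 ^ (2 * a + 1)) = k0 := by
      rw [← hF]; exact FiniteField.pow_card k0
    have : k0 ^ 2 = k0 := by rw [← hsq2, hq]
    have hfac : k0 * (k0 - 1) = 0 := by ring_nf; linear_combination this
    rcases mul_eq_zero.mp hfac with h' | h'
    · exact absurd h' hk0ne
    · exact ⟨sub_eq_zero.mp h', rfl⟩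
  · rintro ⟨rfl, rfl⟩
    intro X
    simp
end
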